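/- arXiv:2007.05614 — 10 statements merged into one kernel-verified Lean document; each statement's English description precedes it below -/
import Mathlib

section
/- Let S be a finite nonempty type, P : S → S → ℝ a row-stochastic irreducible matrix with stationary distribution μ, D : S → S → ℝ a difficulty function with 0 ≤ D i j ≤ Dmax (Dmax ≥ 1) and R : S → S → ℝ a reward function with |R i j| ≤ Rmax. Assume Σ_i D̂ i · μ i ≥ ε for some ε > 0, and assume there exist i₀, j₀ with P i₀ j₀ > 0 and D i₀ j₀ > 0. Then there exist constants C > 0 and H₀ > 1 such that for every real H ≥ H₀ and every stationary distribution μ'_H of the probabilistic-termination matrix P'_H on Option S, one has |(Σ_i R̂'_H i · μ'_H (some i)) / (Σ_i D̂'_H i · μ'_H (some i)) − (Σ_i R̂ i · μ i) / (Σ_i D̂ i · μ i)| ≤ C / H. -/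
open Finset Filter MeasureTheory ProbabilityTheory

/-- A matrix is row-stochastic if all entries are nonnegative and every row sums to 1. -/
def RowStochastic {S : Type*} [Fintype S] (P : S → S → ℝ) : Prop :=
  (∀ i j, 0 ≤ P i j) ∧ ∀ i, ∑ j, P i j = 1

/-- A matrix is irreducible if for all `i, j` there exists `n ≥ 1` with `(P ^ n) i j > 0`. -/
def MatIrreducible {S : Type*} [Fintype S] [DecidableEq S] (P : S → S → ℝ) : Prop :=
  ∀ i j, ∃ n, 1 ≤ n ∧ 0 < ((Matrix.of P) ^ n) i j

/-- A stationary distribution of a matrix `Q`. -/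
def IsStationaryDistr {T : Type*} [Fintype T] (Q : T → T → ℝ) (ν : T → ℝ) : Prop :=
  (∀ i, 0 ≤ ν i) ∧ (∑ i, ν i = 1) ∧ ∀ j, ∑ i, ν i * Q i j = ν j

/-- The probabilistic-termination matrix `P'_H` on `Option S`, with terminal state `none`
and restart state `s₀`. -/
noncomputable def PTMatrix {S : Type*} [Fintype S] [DecidableEq S]
    (P D : S → S → ℝ) (H : ℝ) (s₀ : S) : Option S → Option S → ℝ
  | some i, some j => (1 - 1 / H) ^ (D i j) * P i j
  | some i, none => ∑ j, (1 - (1 - 1 / H) ^ (D i j)) * P i j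
  | none, some j => if j = s₀ then 1 else 0
  | none, none => 0

/-- Expected one-step reward `R̂ i = ∑ j, R i j * P i j`. -/
noncomputable def Rhat {S : Type*} [Fintype S] (P R : S → S → ℝ) (i : S) : ℝ :=
  ∑ j, R i j * P i j

/-- Expected one-step difficulty contribution `D̂ i = ∑ j, D i j * P i j`. -/
noncomputable def Dhat {S : Type*} [Fintype S] (P D : S → S → ℝ) (i : S) : ℝ :=
  ∑ j, D i j * P i j

/-- Expected one-step reward in the probabilistically terminating chain. -/
noncomputable def RhatPT {S : Type*} [Fintype S] (P R D : S → S → ℝ) (H : ℝ) (i : S) : ℝ :=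
  ∑ j, R i j * ((1 - 1 / H) ^ (D i j) * P i j)

/-- Expected one-step difficulty contribution in the probabilistically terminating chain. -/
noncomputable def DhatPT {S : Type*} [Fintype S] (P D : S → S → ℝ) (H : ℝ) (i : S) : ℝ :=
  ∑ j, D i j * ((1 - 1 / H) ^ (D i j) * P i j)

-- ===== auxiliary lemmas =====
section A
variable {S : Type*} [Fintype S] [DecidableEq S]

lemma entry_pow_nonneg (M : Matrix S S ℝ) (h : ∀ i j, 0 ≤ M i j) (n : ℕ) :
    ∀ i j, 0 ≤ (M ^ n) i j := by
  induction n with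
  | zero => intro i j; simp [Matrix.one_apply]; split <;> norm_num
  | succ n ih =>
      intro i j
      rw [pow_succ, Matrix.mul_apply]
      exact Finset.sum_nonneg fun k _ => mul_nonneg (ih i k) (h k j)

lemma vec_invariant_pow (M : Matrix S S ℝ) (v : S → ℝ)
    (h : ∀ j, ∑ i, v i * M i j = v j) (n : ℕ) :
    ∀ j, ∑ i, v i * (M ^ n) i j = v j := by
  induction n with
  | zero => intro j; simp [Matrix.one_apply]
  | succ n ih =>
      intro j
      have h1 : ∀ i, v i * (M ^ (n+1)) i j = ∑ k, v i * (M ^ n) i k * M k j := by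
        intro i
        rw [pow_succ, Matrix.mul_apply, Finset.mul_sum]
        simp [mul_assoc]
      rw [Finset.sum_congr rfl fun i _ => h1 i, Finset.sum_comm]
      have h2 : ∀ k, ∑ i, v i * (M ^ n) i k * M k j = v k * M k j := by
        intro k
        rw [← Finset.sum_mul, ih k]
      rw [Finset.sum_congr rfl fun k _ => h2 k, h j]

lemma no_pos_of_invariant (P : S → S → ℝ) (hP0 : ∀ i j, 0 ≤ P i j)
    (hirr : ∀ i j, ∃ n, 1 ≤ n ∧ 0 < ((Matrix.of P) ^ n) i j)
    (v : S → ℝ) (hv : ∀ j, ∑ i, v i * P i j = v j)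
    (hrow : ∀ i, ∑ j, P i j = 1)
    (hsum : ∑ i, v i = 0) (i : S) (hvi : 0 < v i) : False := by
  have habs : ∀ j, ∑ k, |v k| * P k j = |v j| := by
    have hg : ∀ j, 0 ≤ (∑ k, |v k| * P k j) - |v j| := by
      intro j
      have h1 : |v j| ≤ ∑ k, |v k| * P k j := by
        calc |v j| = |∑ k, v k * P k j| := by rw [hv j]
          _ ≤ ∑ k, |v k * P k j| := Finset.abs_sum_le_sum_abs _ _
          _ = ∑ k, |v k| * P k j := by
              refine Finset.sum_congr rfl fun k _ => ?_
              rw [abs_mul, abs_of_nonneg (hP0 k j)]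
      linarith
    have hgs : ∑ j, ((∑ k, |v k| * P k j) - |v j|) = 0 := by
      rw [Finset.sum_sub_distrib, Finset.sum_comm]
      have h3 : ∀ k, ∑ j, |v k| * P k j = |v k| := by
        intro k; rw [← Finset.mul_sum, hrow k, mul_one]
      rw [Finset.sum_congr rfl fun k _ => h3 k]
      ring
    intro j
    have := (Finset.sum_eq_zero_iff_of_nonneg (fun j _ => hg j)).1 hgs j (Finset.mem_univ j)
    linarith
  set u : S → ℝ := fun k => (|v k| + v k) / 2 with hu_def
  have hu : ∀ j, ∑ k, u k * P k j = u j := by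
    intro j
    have h4 : ∀ k, u k * P k j = (|v k| * P k j) / 2 + (v k * P k j) / 2 := by
      intro k; simp only [hu_def]; ring
    rw [Finset.sum_congr rfl fun k _ => h4 k, Finset.sum_add_distrib,
      ← Finset.sum_div, ← Finset.sum_div, habs j, hv j]
    simp only [hu_def]; ring
  have hun : ∀ k, 0 ≤ u k := by
    intro k
    have := neg_abs_le (v k)
    simp only [hu_def]; linarith
  have hui : 0 < u i := by
    simp only [hu_def]; rw [abs_of_pos hvi]; linarith
  have ⟨k, hk⟩ : ∃ k, v k < 0 := by
    by_contra h
    push_neg at h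
    have : 0 < ∑ m, v m := Finset.sum_pos' (fun m _ => h m) ⟨i, Finset.mem_univ i, hvi⟩
    linarith
  obtain ⟨n, -, hnpos⟩ := hirr i k
  have hupow := vec_invariant_pow (Matrix.of P) u (by simpa using hu) n
  have hkpos : 0 < u k := by
    have h1 : u i * ((Matrix.of P) ^ n) i k ≤ ∑ m, u m * ((Matrix.of P) ^ n) m k :=
      Finset.single_le_sum
        (fun m _ => mul_nonneg (hun m)
          (entry_pow_nonneg (Matrix.of P) (fun a b => hP0 a b) n m k))
        (Finset.mem_univ i)
    have h2 : 0 < u i * ((Matrix.of P) ^ n) i k := mul_pos hui hnpos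
    rw [hupow k] at h1
    linarith
  have : u k = 0 := by
    simp only [hu_def]; rw [abs_of_neg hk]; ring
  linarith

lemma stationary_diff_zero (P : S → S → ℝ) (hP : (∀ i j, 0 ≤ P i j) ∧ ∀ i, ∑ j, P i j = 1)
    (hirr : ∀ i j, ∃ n, 1 ≤ n ∧ 0 < ((Matrix.of P) ^ n) i j)
    (v : S → ℝ) (hv : ∀ j, ∑ i, v i * P i j = v j) (hsum : ∑ i, v i = 0) : v = 0 := by
  funext j
  by_contra h
  rcases lt_or_gt_of_ne h with hlt | hgt
  · exact no_pos_of_invariant P hP.1 hirr (fun k => -v k)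
      (by intro m; simp only [neg_mul, Finset.sum_neg_distrib, hv m])
      hP.2 (by simp [hsum]) j (by simpa using hlt)
  · exact no_pos_of_invariant P hP.1 hirr v hv hP.2 hsum j hgt

end A

section B
variable {T : Type*} [Fintype T]

noncomputable def PhiMap (A : T → T → ℝ) : (T → ℝ) →ₗ[ℝ] (T → ℝ) × ℝ where
  toFun w := (fun j => (∑ i, w i * A i j) - w j, ∑ i, w i)
  map_add' u v := by
    ext j
    · simp [add_mul, Finset.sum_add_distrib]; ring
    · simp [Finset.sum_add_distrib]
  map_smul' c u := by
    ext j
    · simp [Finset.mul_sum, mul_assoc, mul_sub]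
    · simp [Finset.mul_sum]

lemma phi_bound (A : T → T → ℝ) (hinj : ∀ w, PhiMap A w = 0 → w = 0) :
    ∃ K > 0, ∀ w : T → ℝ, ‖w‖ ≤ K * ‖PhiMap A w‖ := by
  have hker : LinearMap.ker (PhiMap A) = ⊥ := LinearMap.ker_eq_bot'.2 hinj
  obtain ⟨g, hg⟩ := (PhiMap A).exists_leftInverse_of_injective hker
  set G := LinearMap.toContinuousLinearMap g with hG
  refine ⟨‖G‖ + 1, by positivity, fun w => ?_⟩
  have hw : w = g (PhiMap A w) := by
    have := congrArg (fun f => f w) hg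
    simpa using this.symm
  have hGw : G (PhiMap A w) = w := by
    simp only [hG, LinearMap.coe_toContinuousLinearMap']
    exact hw.symm
  calc ‖w‖ = ‖G (PhiMap A w)‖ := by rw [hGw]
    _ ≤ ‖G‖ * ‖PhiMap A w‖ := G.le_opNorm _
    _ ≤ (‖G‖ + 1) * ‖PhiMap A w‖ := by
        have := norm_nonneg (PhiMap A w)
        nlinarith

end B

lemma rpow_key {x t : ℝ} (hx0 : 0 < x) (hx2 : x ≤ 1/2) (ht : 0 ≤ t) :
    0 ≤ (1 - x) ^ t ∧ (1 - x) ^ t ≤ 1 ∧ 1 - (1 - x) ^ t ≤ 2 * t * x := by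
  have hy0 : (0:ℝ) < 1 - x := by linarith
  have hy1 : 1 - x ≤ 1 := by linarith
  refine ⟨Real.rpow_nonneg hy0.le t, Real.rpow_le_one hy0.le hy1 ht, ?_⟩
  have hlog : -Real.log (1 - x) ≤ 2 * x := by
    have h1 : Real.log (1-x)⁻¹ ≤ (1-x)⁻¹ - 1 := Real.log_le_sub_one_of_pos (by positivity)
    rw [Real.log_inv] at h1
    have h2 : (1-x)⁻¹ - 1 = x / (1-x) := by field_simp; ring
    have h3 : x / (1-x) ≤ 2 * x := by
      rw [div_le_iff₀ hy0]
      nlinarith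
    linarith
  have hexp : 1 + Real.log (1 - x) * t ≤ (1 - x) ^ t := by
    rw [Real.rpow_def_of_pos hy0]
    have := Real.add_one_le_exp (Real.log (1 - x) * t)
    linarith
  nlinarith [mul_le_mul_of_nonneg_right hlog ht]


set_option maxHeartbeats 2000000

/-- **Theorem 1 (PTO approximation error, stationary-distribution form).**
For all sufficiently large expected horizons `H`, the PT revenue ratio is within `C / H`
of the ARR revenue ratio. -/
theorem pto_main_theorem {S : Type*} [Fintype S] [Nonempty S] [DecidableEq S]
    (P D R : S → S → ℝ) (μ : S → ℝ) (Rmax Dmax ε : ℝ) (s₀ : S)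
    (hP : RowStochastic P) (hirr : MatIrreducible P) (hμ : IsStationaryDistr P μ)
    (hD0 : ∀ i j, 0 ≤ D i j) (hD1 : ∀ i j, D i j ≤ Dmax) (hDmax : 1 ≤ Dmax)
    (hR : ∀ i j, |R i j| ≤ Rmax)
    (hε : 0 < ε) (hεle : ε ≤ ∑ i, Dhat P D i * μ i)
    (hpos : ∃ i₀ j₀, 0 < P i₀ j₀ ∧ 0 < D i₀ j₀) :
    ∃ C > 0, ∃ H₀ > 1, ∀ H, H₀ ≤ H → ∀ μ' : Option S → ℝ,
      IsStationaryDistr (PTMatrix P D H s₀) μ' →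
      |(∑ i, RhatPT P R D H i * μ' (some i)) / (∑ i, DhatPT P D H i * μ' (some i)) -
        (∑ i, Rhat P R i * μ i) / (∑ i, Dhat P D i * μ i)| ≤ C / H := by
  obtain ⟨hP0, hProw⟩ := hP
  obtain ⟨hμ0, hμsum, hμst⟩ := hμ
  have hRmax : 0 ≤ Rmax := le_trans (abs_nonneg _) (hR (Classical.arbitrary S) (Classical.arbitrary S))
  have hDmax0 : (0:ℝ) < Dmax := by linarith
  -- the limit matrix A₀ on Option S
  set A₀ : Option S → Option S → ℝ := fun i j =>
    match i, j with
    | some a, some b => P a b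
    | some _, none => 0
    | none, some b => if b = s₀ then 1 else 0
    | none, none => 0
    with hA₀def
  -- injectivity of PhiMap A₀
  have hinj : ∀ w : Option S → ℝ, PhiMap A₀ w = 0 → w = 0 := by
    intro w hw
    have hw1 : ∀ j, (∑ i, w i * A₀ i j) - w j = 0 := by
      intro j
      have := congrFun (congrArg Prod.fst hw) j
      simpa [PhiMap] using this
    have hw2 : ∑ i, w i = 0 := by
      have := congrArg Prod.snd hw
      simpa [PhiMap] using this
    have hwnone : w none = 0 := by
      have := hw1 none
      rw [Fintype.sum_option] at this
      simp only [hA₀def] at this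
      simpa using this.symm
    have hst : ∀ j : S, ∑ a, w (some a) * P a j = w (some j) := by
      intro j
      have := hw1 (some j)
      rw [Fintype.sum_option] at this
      simp only [hA₀def] at this
      have h2 : w none * (if j = s₀ then (1:ℝ) else 0) = 0 := by rw [hwnone]; ring
      linarith [this, h2]
    have hs : ∑ a, w (some a) = 0 := by
      rw [Fintype.sum_option, hwnone] at hw2
      linarith
    have hv0 : (fun a => w (some a)) = 0 :=
      stationary_diff_zero P ⟨hP0, hProw⟩ hirr _ hst hs
    funext i
    cases i with
    | none => exact hwnone
    | some a => exact congrFun hv0 a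
  obtain ⟨K, hKpos, hKb⟩ := phi_bound A₀ hinj
  -- the embedded stationary distribution
  set ν₀ : Option S → ℝ := fun i => match i with | some a => μ a | none => 0 with hν₀def
  have hν₀st : ∀ j, ∑ i, ν₀ i * A₀ i j = ν₀ j := by
    intro j
    cases j with
    | none => rw [Fintype.sum_option]; simp [hν₀def, hA₀def]
    | some b =>
        rw [Fintype.sum_option]
        simp only [hν₀def, hA₀def]
        rw [hμst b]
        ring_nf
  have hν₀sum : ∑ i, ν₀ i = 1 := by
    rw [Fintype.sum_option]; simp [hν₀def, hμsum]
  -- constants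
  set n : ℝ := (Fintype.card S : ℝ) with hndef
  have hn1 : 1 ≤ n := by
    simp only [hndef]
    exact_mod_cast Fintype.card_pos
  set K₂ : ℝ := K * (2 * Dmax) with hK₂def
  have hK₂pos : 0 < K₂ := by positivity
  set CN : ℝ := n * (Rmax * K₂) + 2 * Rmax * Dmax with hCNdef
  set CD : ℝ := n * (Dmax * K₂) + 2 * Dmax * Dmax with hCDdef
  have hCN0 : 0 ≤ CN := by positivity
  have hCD0 : 0 < CD := by
    rw [hCDdef]
    have h1 : (0:ℝ) ≤ n * (Dmax * K₂) :=
      mul_nonneg (by linarith) (mul_nonneg hDmax0.le hK₂pos.le)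
    nlinarith [mul_pos hDmax0 hDmax0]
  set Cfin : ℝ := (CN * Dmax + Rmax * CD) / (ε * (ε / 2)) + 1 with hCdef
  have hCpos : 0 < Cfin := by
    rw [hCdef]
    have h1 : (0:ℝ) ≤ CN * Dmax + Rmax * CD :=
      add_nonneg (mul_nonneg hCN0 hDmax0.le) (mul_nonneg hRmax hCD0.le)
    have h2 : (0:ℝ) ≤ (CN * Dmax + Rmax * CD) / (ε * (ε / 2)) :=
      div_nonneg h1 (by positivity)
    linarith
  have hq : (0:ℝ) ≤ 4 * CD / ε := div_nonneg (by linarith) hε.le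
  refine ⟨Cfin, hCpos, 2 + 4 * CD / ε, by linarith, ?_⟩
  intro H hH μ' hμ'
  obtain ⟨hμ'0, hμ'sum, hμ'st⟩ := hμ'
  have hH2 : 2 ≤ H := le_trans (by linarith) hH
  have hHpos : 0 < H := by linarith
  set x : ℝ := 1 / H with hxdef
  have hx0 : 0 < x := by positivity
  have hx2 : x ≤ 1 / 2 := by
    rw [hxdef, div_le_div_iff₀ hHpos two_pos]
    linarith
  have hxC : CD * x ≤ ε / 4 := by
    have h1 : 4 * CD / ε ≤ H := by linarith
    have h2 : 4 * CD ≤ H * ε := by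
      rw [div_le_iff₀ hε] at h1
      linarith
    rw [hxdef]
    rw [mul_one_div, div_le_div_iff₀ hHpos (by norm_num : (0:ℝ) < 4)]
    nlinarith
  -- entrywise difference bound
  have hPle1 : ∀ a b, P a b ≤ 1 := by
    intro a b
    calc P a b ≤ ∑ j, P a j := Finset.single_le_sum (fun j _ => hP0 a j) (Finset.mem_univ b)
      _ = 1 := hProw a
  have hkey : ∀ a b : S, 0 ≤ (1 - x) ^ (D a b) ∧ (1 - x) ^ (D a b) ≤ 1 ∧
      1 - (1 - x) ^ (D a b) ≤ 2 * Dmax * x := by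
    intro a b
    obtain ⟨h1, h2, h3⟩ := rpow_key hx0 hx2 (hD0 a b)
    refine ⟨h1, h2, le_trans h3 ?_⟩
    have := hD1 a b
    nlinarith
  have hA : ∀ i j, PTMatrix P D H s₀ i j = (match i, j with
    | some a, some b => (1 - x) ^ (D a b) * P a b
    | some a, none => ∑ b, (1 - (1 - x) ^ (D a b)) * P a b
    | none, some b => if b = s₀ then (1:ℝ) else 0
    | none, none => 0) := by
    intro i j
    cases i <;> cases j <;> simp [PTMatrix, hxdef]
  have hdiff : ∀ i j, |A₀ i j - PTMatrix P D H s₀ i j| ≤ 2 * Dmax * x := by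
    intro i j
    have hDx : 0 ≤ 2 * Dmax * x := by positivity
    rw [hA i j]
    cases i with
    | none => cases j <;> simpa [hA₀def] using hDx
    | some a =>
        cases j with
        | some b =>
            simp only [hA₀def]
            have h1 : P a b - (1 - x) ^ (D a b) * P a b = (1 - (1 - x) ^ (D a b)) * P a b := by ring
            rw [h1, abs_of_nonneg (mul_nonneg (by linarith [(hkey a b).2.1]) (hP0 a b))]
            calc (1 - (1 - x) ^ (D a b)) * P a b ≤ (2 * Dmax * x) * 1 := by
                  apply mul_le_mul (hkey a b).2.2 (hPle1 a b) (hP0 a b)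
                  positivity
              _ = 2 * Dmax * x := by ring
        | none =>
            simp only [hA₀def, zero_sub, abs_neg]
            rw [abs_of_nonneg (Finset.sum_nonneg fun b _ =>
              mul_nonneg (by linarith [(hkey a b).2.1]) (hP0 a b))]
            calc ∑ b, (1 - (1 - x) ^ (D a b)) * P a b
                ≤ ∑ b, (2 * Dmax * x) * P a b := by
                  refine Finset.sum_le_sum fun b _ => ?_
                  exact mul_le_mul_of_nonneg_right (hkey a b).2.2 (hP0 a b)
              _ = 2 * Dmax * x := by rw [← Finset.mul_sum, hProw a, mul_one]
  -- the difference vector and its bound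
  set w : Option S → ℝ := fun i => μ' i - ν₀ i with hwdef
  have hΦw : PhiMap A₀ w =
      (fun j => ∑ i, μ' i * (A₀ i j - PTMatrix P D H s₀ i j), 0) := by
    have h1 : ∀ j, (∑ i, w i * A₀ i j) - w j
        = ∑ i, μ' i * (A₀ i j - PTMatrix P D H s₀ i j) := by
      intro j
      have e1 : ∑ i, w i * A₀ i j = ∑ i, μ' i * A₀ i j - ∑ i, ν₀ i * A₀ i j := by
        rw [← Finset.sum_sub_distrib]
        exact Finset.sum_congr rfl fun i _ => by simp only [hwdef]; ring
      have eb : ∑ i, μ' i * (A₀ i j - PTMatrix P D H s₀ i j)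
          = ∑ i, μ' i * A₀ i j - ∑ i, μ' i * PTMatrix P D H s₀ i j := by
        rw [← Finset.sum_sub_distrib]
        exact Finset.sum_congr rfl fun i _ => by ring
      rw [e1, eb, hν₀st j, hμ'st j]
      simp only [hwdef]
      ring
    have h2 : ∑ i, w i = 0 := by
      have : ∑ i, w i = ∑ i, μ' i - ∑ i, ν₀ i := by
        rw [← Finset.sum_sub_distrib]
      rw [this, hμ'sum, hν₀sum]; ring
    simp only [PhiMap, LinearMap.coe_mk, AddHom.coe_mk]
    exact Prod.ext (funext h1) h2
  have hΦnorm : ‖PhiMap A₀ w‖ ≤ 2 * Dmax * x := by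
    rw [hΦw, Prod.norm_def]
    have hDx : 0 ≤ 2 * Dmax * x := by positivity
    apply max_le _ (by simpa using hDx)
    rw [pi_norm_le_iff_of_nonneg hDx]
    intro j
    rw [Real.norm_eq_abs]
    calc |∑ i, μ' i * (A₀ i j - PTMatrix P D H s₀ i j)|
        ≤ ∑ i, |μ' i * (A₀ i j - PTMatrix P D H s₀ i j)| := Finset.abs_sum_le_sum_abs _ _
      _ ≤ ∑ i, μ' i * (2 * Dmax * x) := by
          refine Finset.sum_le_sum fun i _ => ?_
          rw [abs_mul, abs_of_nonneg (hμ'0 i)]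
          exact mul_le_mul_of_nonneg_left (hdiff i j) (hμ'0 i)
      _ = 2 * Dmax * x := by rw [← Finset.sum_mul, hμ'sum, one_mul]
  have hwb : ∀ i, |w i| ≤ K₂ * x := by
    intro i
    have h1 : |w i| ≤ ‖w‖ := by
      have := norm_le_pi_norm w i
      simpa [Real.norm_eq_abs] using this
    have h2 : ‖w‖ ≤ K * ‖PhiMap A₀ w‖ := hKb w
    have h3 : K * ‖PhiMap A₀ w‖ ≤ K * (2 * Dmax * x) :=
      mul_le_mul_of_nonneg_left hΦnorm hKpos.le
    calc |w i| ≤ K * (2 * Dmax * x) := by linarith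
      _ = K₂ * x := by rw [hK₂def]; ring
  -- pointwise hat bounds
  have hRhatPT_bd : ∀ i, |RhatPT P R D H i| ≤ Rmax := by
    intro i
    rw [RhatPT]
    calc |∑ j, R i j * ((1 - 1/H) ^ (D i j) * P i j)|
        ≤ ∑ j, |R i j * ((1 - 1/H) ^ (D i j) * P i j)| := Finset.abs_sum_le_sum_abs _ _
      _ ≤ ∑ j, Rmax * P i j := by
          refine Finset.sum_le_sum fun j _ => ?_
          rw [abs_mul]
          have hx' : (1 - 1/H) = 1 - x := by rw [hxdef]
          have h0 := (hkey i j).1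
          have h1 := (hkey i j).2.1
          have : |(1 - 1/H) ^ (D i j) * P i j| = (1-x) ^ (D i j) * P i j := by
            rw [hx', abs_of_nonneg (mul_nonneg h0 (hP0 i j))]
          rw [this]
          calc |R i j| * ((1-x) ^ (D i j) * P i j) ≤ Rmax * ((1-x) ^ (D i j) * P i j) :=
                mul_le_mul_of_nonneg_right (hR i j) (mul_nonneg h0 (hP0 i j))
            _ ≤ Rmax * (1 * P i j) := by
                apply mul_le_mul_of_nonneg_left _ hRmax
                exact mul_le_mul_of_nonneg_right h1 (hP0 i j)
            _ = Rmax * P i j := by ring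
      _ = Rmax := by rw [← Finset.mul_sum, hProw i, mul_one]
  have hRhat_diff : ∀ i, |RhatPT P R D H i - Rhat P R i| ≤ 2 * Rmax * Dmax * x := by
    intro i
    rw [RhatPT, Rhat, ← Finset.sum_sub_distrib]
    calc |∑ j, (R i j * ((1 - 1/H) ^ (D i j) * P i j) - R i j * P i j)|
        ≤ ∑ j, |R i j * ((1 - 1/H) ^ (D i j) * P i j) - R i j * P i j| :=
          Finset.abs_sum_le_sum_abs _ _
      _ ≤ ∑ j, Rmax * (2 * Dmax * x) * P i j := by
          refine Finset.sum_le_sum fun j _ => ?_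
          have hx' : (1 - 1/H : ℝ) = 1 - x := by rw [hxdef]
          have h0 := (hkey i j).1
          have h1 := (hkey i j).2.1
          have h2 := (hkey i j).2.2
          have e1 : R i j * ((1 - 1/H) ^ (D i j) * P i j) - R i j * P i j
              = -(R i j * ((1 - (1-x) ^ (D i j)) * P i j)) := by rw [hx']; ring
          rw [e1, abs_neg, abs_mul, abs_mul]
          rw [abs_of_nonneg (by linarith : (0:ℝ) ≤ 1 - (1-x) ^ (D i j)),
            abs_of_nonneg (hP0 i j)]
          have : |R i j| * ((1 - (1-x) ^ (D i j)) * P i j)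
              ≤ Rmax * ((2 * Dmax * x) * P i j) := by
            apply mul_le_mul (hR i j) _ (mul_nonneg (by linarith) (hP0 i j)) hRmax
            exact mul_le_mul_of_nonneg_right h2 (hP0 i j)
          linarith [this]
      _ = 2 * Rmax * Dmax * x := by
          rw [← Finset.mul_sum, hProw i]; ring
  have hDhatPT_bd : ∀ i, |DhatPT P D H i| ≤ Dmax := by
    intro i
    rw [DhatPT]
    calc |∑ j, D i j * ((1 - 1/H) ^ (D i j) * P i j)|
        ≤ ∑ j, |D i j * ((1 - 1/H) ^ (D i j) * P i j)| := Finset.abs_sum_le_sum_abs _ _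
      _ ≤ ∑ j, Dmax * P i j := by
          refine Finset.sum_le_sum fun j _ => ?_
          rw [abs_mul]
          have hx' : (1 - 1/H : ℝ) = 1 - x := by rw [hxdef]
          have h0 := (hkey i j).1
          have h1 := (hkey i j).2.1
          have e1 : |(1 - 1/H) ^ (D i j) * P i j| = (1-x) ^ (D i j) * P i j := by
            rw [hx', abs_of_nonneg (mul_nonneg h0 (hP0 i j))]
          rw [e1, abs_of_nonneg (hD0 i j)]
          calc D i j * ((1-x) ^ (D i j) * P i j) ≤ Dmax * ((1-x) ^ (D i j) * P i j) :=
                mul_le_mul_of_nonneg_right (hD1 i j) (mul_nonneg h0 (hP0 i j))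
            _ ≤ Dmax * (1 * P i j) := by
                apply mul_le_mul_of_nonneg_left _ hDmax0.le
                exact mul_le_mul_of_nonneg_right h1 (hP0 i j)
            _ = Dmax * P i j := by ring
      _ = Dmax := by rw [← Finset.mul_sum, hProw i, mul_one]
  have hDhat_diff : ∀ i, |DhatPT P D H i - Dhat P D i| ≤ 2 * Dmax * Dmax * x := by
    intro i
    rw [DhatPT, Dhat, ← Finset.sum_sub_distrib]
    calc |∑ j, (D i j * ((1 - 1/H) ^ (D i j) * P i j) - D i j * P i j)|
        ≤ ∑ j, |D i j * ((1 - 1/H) ^ (D i j) * P i j) - D i j * P i j| :=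
          Finset.abs_sum_le_sum_abs _ _
      _ ≤ ∑ j, Dmax * (2 * Dmax * x) * P i j := by
          refine Finset.sum_le_sum fun j _ => ?_
          have hx' : (1 - 1/H : ℝ) = 1 - x := by rw [hxdef]
          have h0 := (hkey i j).1
          have h1 := (hkey i j).2.1
          have h2 := (hkey i j).2.2
          have e1 : D i j * ((1 - 1/H) ^ (D i j) * P i j) - D i j * P i j
              = -(D i j * ((1 - (1-x) ^ (D i j)) * P i j)) := by rw [hx']; ring
          rw [e1, abs_neg, abs_mul, abs_mul]
          rw [abs_of_nonneg (by linarith : (0:ℝ) ≤ 1 - (1-x) ^ (D i j)),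
            abs_of_nonneg (hP0 i j), abs_of_nonneg (hD0 i j)]
          have : D i j * ((1 - (1-x) ^ (D i j)) * P i j)
              ≤ Dmax * ((2 * Dmax * x) * P i j) := by
            apply mul_le_mul (hD1 i j) _ (mul_nonneg (by linarith) (hP0 i j)) hDmax0.le
            exact mul_le_mul_of_nonneg_right h2 (hP0 i j)
          linarith [this]
      _ = 2 * Dmax * Dmax * x := by
          rw [← Finset.mul_sum, hProw i]; ring
  have hRhat_bd : ∀ i, |Rhat P R i| ≤ Rmax := by
    intro i
    rw [Rhat]
    calc |∑ j, R i j * P i j| ≤ ∑ j, |R i j * P i j| := Finset.abs_sum_le_sum_abs _ _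
      _ ≤ ∑ j, Rmax * P i j := by
          refine Finset.sum_le_sum fun j _ => ?_
          rw [abs_mul, abs_of_nonneg (hP0 i j)]
          exact mul_le_mul_of_nonneg_right (hR i j) (hP0 i j)
      _ = Rmax := by rw [← Finset.mul_sum, hProw i, mul_one]
  have hDhat_bd : ∀ i, 0 ≤ Dhat P D i ∧ Dhat P D i ≤ Dmax := by
    intro i
    constructor
    · exact Finset.sum_nonneg fun j _ => mul_nonneg (hD0 i j) (hP0 i j)
    · rw [Dhat]
      calc ∑ j, D i j * P i j ≤ ∑ j, Dmax * P i j :=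
            Finset.sum_le_sum fun j _ => mul_le_mul_of_nonneg_right (hD1 i j) (hP0 i j)
        _ = Dmax := by rw [← Finset.mul_sum, hProw i, mul_one]
  -- the four aggregate quantities
  set num : ℝ := ∑ i, Rhat P R i * μ i with hnumdef
  set den : ℝ := ∑ i, Dhat P D i * μ i with hdendef
  set num' : ℝ := ∑ i, RhatPT P R D H i * μ' (some i) with hnum'def
  set den' : ℝ := ∑ i, DhatPT P D H i * μ' (some i) with hden'def
  have hw_some : ∀ i : S, |μ' (some i) - μ i| ≤ K₂ * x := by
    intro i
    have := hwb (some i)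
    simpa [hwdef, hν₀def] using this
  have hnum_bd : |num| ≤ Rmax := by
    rw [hnumdef]
    calc |∑ i, Rhat P R i * μ i| ≤ ∑ i, |Rhat P R i * μ i| := Finset.abs_sum_le_sum_abs _ _
      _ ≤ ∑ i, Rmax * μ i := by
          refine Finset.sum_le_sum fun i _ => ?_
          rw [abs_mul, abs_of_nonneg (hμ0 i)]
          exact mul_le_mul_of_nonneg_right (hRhat_bd i) (hμ0 i)
      _ = Rmax := by rw [← Finset.mul_sum, hμsum, mul_one]
  have hden_lb : ε ≤ den := hεle
  have hden_ub : den ≤ Dmax := by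
    rw [hdendef]
    calc ∑ i, Dhat P D i * μ i ≤ ∑ i, Dmax * μ i :=
          Finset.sum_le_sum fun i _ =>
            mul_le_mul_of_nonneg_right (hDhat_bd i).2 (hμ0 i)
      _ = Dmax := by rw [← Finset.mul_sum, hμsum, mul_one]
  have hnum_diff : |num' - num| ≤ CN * x := by
    have e1 : num' - num = ∑ i, (RhatPT P R D H i * (μ' (some i) - μ i)
        + (RhatPT P R D H i - Rhat P R i) * μ i) := by
      rw [hnum'def, hnumdef, ← Finset.sum_sub_distrib]
      exact Finset.sum_congr rfl fun i _ => by ring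
    rw [e1]
    calc |∑ i, (RhatPT P R D H i * (μ' (some i) - μ i)
        + (RhatPT P R D H i - Rhat P R i) * μ i)|
        ≤ ∑ i, |RhatPT P R D H i * (μ' (some i) - μ i)
            + (RhatPT P R D H i - Rhat P R i) * μ i| := Finset.abs_sum_le_sum_abs _ _
      _ ≤ ∑ i, (Rmax * (K₂ * x) + (2 * Rmax * Dmax * x) * μ i) := by
          refine Finset.sum_le_sum fun i _ => ?_
          calc |RhatPT P R D H i * (μ' (some i) - μ i)
              + (RhatPT P R D H i - Rhat P R i) * μ i|
              ≤ |RhatPT P R D H i * (μ' (some i) - μ i)|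
                + |(RhatPT P R D H i - Rhat P R i) * μ i| := abs_add_le _ _
            _ ≤ Rmax * (K₂ * x) + (2 * Rmax * Dmax * x) * μ i := by
                gcongr
                · rw [abs_mul]
                  exact mul_le_mul (hRhatPT_bd i) (hw_some i) (abs_nonneg _) hRmax
                · rw [abs_mul, abs_of_nonneg (hμ0 i)]
                  exact mul_le_mul_of_nonneg_right (hRhat_diff i) (hμ0 i)
      _ = CN * x := by
          rw [Finset.sum_add_distrib, Finset.sum_const, ← Finset.mul_sum, hμsum,
            Finset.card_univ, nsmul_eq_mul, hCNdef, ← hndef]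
          ring
  have hden_diff : |den' - den| ≤ CD * x := by
    have e1 : den' - den = ∑ i, (DhatPT P D H i * (μ' (some i) - μ i)
        + (DhatPT P D H i - Dhat P D i) * μ i) := by
      rw [hden'def, hdendef, ← Finset.sum_sub_distrib]
      exact Finset.sum_congr rfl fun i _ => by ring
    rw [e1]
    calc |∑ i, (DhatPT P D H i * (μ' (some i) - μ i)
        + (DhatPT P D H i - Dhat P D i) * μ i)|
        ≤ ∑ i, |DhatPT P D H i * (μ' (some i) - μ i)
            + (DhatPT P D H i - Dhat P D i) * μ i| := Finset.abs_sum_le_sum_abs _ _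
      _ ≤ ∑ i, (Dmax * (K₂ * x) + (2 * Dmax * Dmax * x) * μ i) := by
          refine Finset.sum_le_sum fun i _ => ?_
          calc |DhatPT P D H i * (μ' (some i) - μ i)
              + (DhatPT P D H i - Dhat P D i) * μ i|
              ≤ |DhatPT P D H i * (μ' (some i) - μ i)|
                + |(DhatPT P D H i - Dhat P D i) * μ i| := abs_add_le _ _
            _ ≤ Dmax * (K₂ * x) + (2 * Dmax * Dmax * x) * μ i := by
                gcongr
                · rw [abs_mul]
                  exact mul_le_mul (hDhatPT_bd i) (hw_some i) (abs_nonneg _) hDmax0.le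
                · rw [abs_mul, abs_of_nonneg (hμ0 i)]
                  exact mul_le_mul_of_nonneg_right (hDhat_diff i) (hμ0 i)
      _ = CD * x := by
          rw [Finset.sum_add_distrib, Finset.sum_const, ← Finset.mul_sum, hμsum,
            Finset.card_univ, nsmul_eq_mul, hCDdef, ← hndef]
          ring
  have hden'_lb : ε / 2 ≤ den' := by
    have h1 : den - den' ≤ |den' - den| := by
      rw [abs_sub_comm]; exact le_abs_self _
    have h2 : |den' - den| ≤ ε / 4 := le_trans hden_diff hxC
    linarith
  have hden_pos : 0 < den := lt_of_lt_of_le hε hden_lb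
  have hden'_pos : 0 < den' := by linarith
  -- final assembly
  rw [div_sub_div _ _ (ne_of_gt hden'_pos) (ne_of_gt hden_pos), abs_div]
  have hnum_top : |num' * den - den' * num| ≤ (CN * Dmax + Rmax * CD) * x := by
    have e1 : num' * den - den' * num = (num' - num) * den + num * (den - den') := by ring
    rw [e1]
    calc |(num' - num) * den + num * (den - den')|
        ≤ |(num' - num) * den| + |num * (den - den')| := abs_add_le _ _
      _ ≤ (CN * x) * Dmax + Rmax * (CD * x) := by
          gcongr
          · rw [abs_mul]
            apply mul_le_mul hnum_diff _ (abs_nonneg _) (by positivity)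
            rw [abs_of_pos hden_pos]; exact hden_ub
          · rw [abs_mul]
            apply mul_le_mul hnum_bd _ (abs_nonneg _) hRmax
            rw [abs_sub_comm]; exact hden_diff
      _ = (CN * Dmax + Rmax * CD) * x := by ring
  have hden_bot : ε * (ε / 2) ≤ |den' * den| := by
    rw [abs_of_pos (mul_pos hden'_pos hden_pos)]
    calc ε * (ε / 2) = (ε / 2) * ε := by ring
      _ ≤ den' * den := mul_le_mul hden'_lb hden_lb hε.le (by linarith)
  calc |num' * den - den' * num| / |den' * den|
      ≤ ((CN * Dmax + Rmax * CD) * x) / (ε * (ε / 2)) := by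
        apply div_le_div₀ (by positivity) hnum_top (by positivity) hden_bot
    _ = ((CN * Dmax + Rmax * CD) / (ε * (ε / 2))) * x := by ring
    _ ≤ Cfin * x := by
        apply mul_le_mul_of_nonneg_right _ hx0.le
        rw [hCdef]; linarith
    _ = Cfin / H := by rw [hxdef]; ring
end

section
/- Let S be a finite nonempty type, P : S → S → ℝ a row-stochastic irreducible matrix, D : S → S → ℝ with D i j ≥ 0 for all i, j, H > 1 a real number, and s₀ ∈ S a fixed restart state. Assume there exist i₀, j₀ ∈ S with P i₀ j₀ > 0 and D i₀ j₀ > 0. Then the probabilistic-termination matrix P'_H on Option S is row-stochastic and irreducible: for every pair of states x, y ∈ Option S there exists n ≥ 1 with (P'_H)^n x y > 0. -/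
open Finset Filter MeasureTheory ProbabilityTheory

/-- A stationary distribution of a matrix `Q`. -/
def IsStationaryDist {T : Type*} [Fintype T] (Q : T → T → ℝ) (ν : T → ℝ) : Prop :=
  (∀ i, 0 ≤ ν i) ∧ (∑ i, ν i = 1) ∧ ∀ j, ∑ i, ν i * Q i j = ν j

private lemma powEntry_nonneg {T : Type*} [Fintype T] [DecidableEq T] {Q : T → T → ℝ}
    (h : ∀ i j, 0 ≤ Q i j) : ∀ n i j, 0 ≤ ((Matrix.of Q) ^ n) i j := by
  intro n
  induction n with
  | zero =>
    intro i j
    rw [pow_zero]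
    by_cases hij : i = j <;> simp [Matrix.one_apply, hij]
  | succ n ih =>
    intro i j
    rw [pow_succ, Matrix.mul_apply]
    exact Finset.sum_nonneg fun k _ => mul_nonneg (ih i k) (h k j)

private lemma pow_step_right {T : Type*} [Fintype T] [DecidableEq T] {Q : T → T → ℝ}
    (h : ∀ i j, 0 ≤ Q i j) {n : ℕ} {i k j : T} (h1 : 0 < ((Matrix.of Q) ^ n) i k)
    (h2 : 0 < Q k j) : 0 < ((Matrix.of Q) ^ (n + 1)) i j := by
  rw [pow_succ, Matrix.mul_apply]
  exact Finset.sum_pos' (fun x _ => mul_nonneg (powEntry_nonneg h n i x) (h x j))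
    ⟨k, Finset.mem_univ k, mul_pos h1 h2⟩

private lemma pow_step_left {T : Type*} [Fintype T] [DecidableEq T] {Q : T → T → ℝ}
    (h : ∀ i j, 0 ≤ Q i j) {n : ℕ} {i k j : T} (h1 : 0 < Q i k)
    (h2 : 0 < ((Matrix.of Q) ^ n) k j) : 0 < ((Matrix.of Q) ^ (n + 1)) i j := by
  rw [pow_succ', Matrix.mul_apply]
  exact Finset.sum_pos' (fun x _ => mul_nonneg (h i x) (powEntry_nonneg h n x j))
    ⟨k, Finset.mem_univ k, mul_pos h1 h2⟩

/-- **Lemma 2 (irreducibility part).** The probabilistic-termination matrix with restart is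
row-stochastic and irreducible. -/
theorem ptMatrix_rowStochastic_and_irreducible {S : Type*} [Fintype S] [Nonempty S]
    [DecidableEq S] (P D : S → S → ℝ) (H : ℝ) (s₀ : S)
    (hP : RowStochastic P) (hirr : MatIrreducible P)
    (hD0 : ∀ i j, 0 ≤ D i j) (hH : 1 < H)
    (hpos : ∃ i₀ j₀, 0 < P i₀ j₀ ∧ 0 < D i₀ j₀) :
    RowStochastic (PTMatrix P D H s₀) ∧ MatIrreducible (PTMatrix P D H s₀) := by
  obtain ⟨hPnn, hProw⟩ := hP
  obtain ⟨i₀, j₀, hPij, hDij⟩ := hpos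
  have hH0 : 0 < H := lt_trans one_pos hH
  have ha0 : 0 < 1 - 1 / H := by
    have : 1 / H < 1 := by rw [div_lt_one hH0]; exact hH
    linarith
  have ha1 : 1 - 1 / H < 1 := by
    have : 0 < 1 / H := by positivity
    linarith
  set Q := PTMatrix P D H s₀ with hQdef
  have hQss : ∀ i j, Q (some i) (some j) = (1 - 1 / H) ^ (D i j) * P i j := fun _ _ => rfl
  have hQsn : ∀ i, Q (some i) none = ∑ j, (1 - (1 - 1 / H) ^ (D i j)) * P i j := fun _ => rfl
  have hQns : ∀ j, Q none (some j) = if j = s₀ then 1 else 0 := fun _ => rfl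
  have hQnn' : Q none none = 0 := rfl
  have hQnn : ∀ x y, 0 ≤ Q x y := by
    intro x y
    match x, y with
    | some i, some j =>
      rw [hQss]
      exact mul_nonneg (Real.rpow_nonneg ha0.le _) (hPnn i j)
    | some i, none =>
      rw [hQsn]
      exact Finset.sum_nonneg fun j _ => mul_nonneg
        (sub_nonneg.mpr (Real.rpow_le_one ha0.le ha1.le (hD0 i j))) (hPnn i j)
    | none, some j =>
      rw [hQns]; split <;> norm_num
    | none, none => rw [hQnn']
  have hRS : RowStochastic Q := by
    refine ⟨hQnn, ?_⟩
    intro x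
    match x with
    | some i =>
      rw [Fintype.sum_option, hQsn, ← Finset.sum_add_distrib]
      have hterm : ∀ j ∈ Finset.univ, (1 - (1 - 1 / H) ^ (D i j)) * P i j
          + Q (some i) (some j) = P i j := by
        intro j _
        rw [hQss]; ring
      rw [Finset.sum_congr rfl hterm, hProw i]
    | none =>
      rw [Fintype.sum_option, hQnn', zero_add]
      simp only [hQns]
      rw [Finset.sum_ite_eq' Finset.univ s₀ (fun _ => (1 : ℝ))]
      simp
  have hss : ∀ i j, 0 < P i j → 0 < Q (some i) (some j) := by
    intro i j hp
    rw [hQss]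
    exact mul_pos (Real.rpow_pos_of_pos ha0 _) hp
  have hsn : 0 < Q (some i₀) none := by
    rw [hQsn]
    refine Finset.sum_pos' (fun j _ => mul_nonneg
      (sub_nonneg.mpr (Real.rpow_le_one ha0.le ha1.le (hD0 i₀ j))) (hPnn i₀ j))
      ⟨j₀, Finset.mem_univ j₀, mul_pos (sub_pos.mpr (Real.rpow_lt_one ha0.le ha1 hDij)) hPij⟩
  have hns : 0 < Q none (some s₀) := by rw [hQns]; simp
  have hlift : ∀ n (i j : S), 0 < ((Matrix.of P) ^ n) i j →
      0 < ((Matrix.of Q) ^ n) (some i) (some j) := by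
    intro n
    induction n with
    | zero =>
      intro i j h
      rw [pow_zero] at h ⊢
      have hij : i = j := by
        by_contra hne
        rw [Matrix.one_apply_ne hne] at h
        exact lt_irrefl 0 h
      subst hij
      simp [Matrix.one_apply]
    | succ n ih =>
      intro i j h
      rw [pow_succ, Matrix.mul_apply] at h
      obtain ⟨k, hk⟩ : ∃ k, 0 < ((Matrix.of P) ^ n) i k * (Matrix.of P) k j := by
        by_contra hc
        push_neg at hc
        exact absurd h (not_lt.mpr (Finset.sum_nonpos fun k _ => hc k))
      rcases mul_pos_iff.mp hk with ⟨h1, h2⟩ | ⟨h1, _⟩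
      · exact pow_step_right hQnn (ih _ _ h1) (hss _ _ h2)
      · exact absurd h1 (not_lt.mpr (powEntry_nonneg hPnn n i k))
  refine ⟨hRS, ?_⟩
  intro x y
  match x, y with
  | some i, some j =>
    obtain ⟨n, hn1, hn⟩ := hirr i j
    exact ⟨n, hn1, hlift n i j hn⟩
  | some i, none =>
    obtain ⟨n, hn1, hn⟩ := hirr i i₀
    exact ⟨n + 1, by omega, pow_step_right hQnn (hlift n i i₀ hn) hsn⟩
  | none, some j =>
    obtain ⟨n, hn1, hn⟩ := hirr s₀ j
    exact ⟨n + 1, by omega, pow_step_left hQnn hns (hlift n s₀ j hn)⟩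
  | none, none =>
    obtain ⟨n, hn1, hn⟩ := hirr s₀ i₀
    exact ⟨n + 1 + 1, by omega,
      pow_step_right hQnn (pow_step_left hQnn hns (hlift n s₀ i₀ hn)) hsn⟩
end

section
/- Let (Ω, ℱ, ℙ) be a probability space, H > 1 and Dmax ≥ 1 real numbers, and λ = −log(1 − 1/H). Let Z : Ω → ℝ be exponentially distributed with rate λ, let (D_t)_{t ≥ 1} be real random variables with 0 ≤ D_t ≤ Dmax almost surely, such that Z is independent of the σ-algebra generated by the family (D_t)_{t ≥ 1}, and assume Σ_{t=1}^T D_t → ∞ almost surely as T → ∞. Define the stopping index Term(ω) as the least T ≥ 1 with Σ_{t=1}^T D_t(ω) > Z(ω). Then H − Dmax − 1 ≤ E[Σ_{t=1}^{Term} D_t] ≤ H + Dmax. -/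
open Filter MeasureTheory ProbabilityTheory

open scoped ENNReal NNReal

section Aux

open Real Set

lemma aux_expPDF_as_nnreal (r : ℝ) :
    expMeasure r = volume.withDensity (fun x => ((gammaPDFReal 1 r x).toNNReal : ℝ≥0∞)) := rfl

lemma aux_exp_fun_eq {r : ℝ} (hr : 0 < r) (x : ℝ) :
    ((gammaPDFReal 1 r x).toNNReal : ℝ) • x = if 0 ≤ x then r * Real.exp (-(r * x)) * x else 0 := by
  rw [Real.coe_toNNReal _ (gammaPDFReal_nonneg one_pos hr x)]
  simp only [gammaPDFReal, smul_eq_mul]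
  split_ifs with h
  · rw [Real.Gamma_one]
    norm_num
  · ring

lemma aux_exp_integrable_aux {r : ℝ} (hr : 0 < r) :
    Integrable (fun x => ((gammaPDFReal 1 r x).toNNReal : ℝ) • x) volume ∧
    ∫ x, ((gammaPDFReal 1 r x).toNNReal : ℝ) • x = 1 / r := by
  have hfun : ∀ x, ((gammaPDFReal 1 r x).toNNReal : ℝ) • x
      = if 0 ≤ x then r * Real.exp (-(r * x)) * x else 0 := aux_exp_fun_eq hr
  have hzero : ∀ x ∉ Ioi (0:ℝ), ((gammaPDFReal 1 r x).toNNReal : ℝ) • x = 0 := by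
    intro x hx
    rw [hfun x]
    simp only [mem_Ioi, not_lt] at hx
    split_ifs with h
    · have : x = 0 := le_antisymm hx h
      simp [this]
    · rfl
  have hcongr : ∀ x ∈ Ioi (0:ℝ), ((gammaPDFReal 1 r x).toNNReal : ℝ) • x
      = r * (x ^ ((2:ℝ)-1) * Real.exp (-(r * x))) := by
    intro x hx
    rw [hfun x, if_pos (le_of_lt hx)]
    rw [show ((2:ℝ)-1) = 1 by norm_num, Real.rpow_one]
    ring
  have hint : IntegrableOn (fun x => ((gammaPDFReal 1 r x).toNNReal : ℝ) • x) (Ioi 0) volume := by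
    have h0 := (integrableOn_rpow_mul_exp_neg_mul_rpow (p := 1) (s := 1) (b := r)
      (by norm_num) zero_lt_one hr).const_mul r
    refine MeasureTheory.IntegrableOn.congr_fun h0 (fun x hx => ?_) measurableSet_Ioi
    rw [hcongr x hx, Real.rpow_one]
    norm_num
  have hsupp : Function.support (fun x => ((gammaPDFReal 1 r x).toNNReal : ℝ) • x) ⊆ Ioi 0 := by
    intro x hx
    by_contra h
    exact hx (hzero x h)
  have hInt : Integrable (fun x => ((gammaPDFReal 1 r x).toNNReal : ℝ) • x) volume :=
    (integrableOn_iff_integrable_of_support_subset hsupp).mp hint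
  refine ⟨hInt, ?_⟩
  rw [← setIntegral_eq_integral_of_forall_compl_eq_zero hzero]
  rw [setIntegral_congr_fun measurableSet_Ioi hcongr, integral_const_mul,
    integral_rpow_mul_exp_neg_mul_Ioi (by norm_num : (0:ℝ) < 2) hr, Real.Gamma_two]
  field_simp
  rw [show (2:ℝ) = ((2:ℕ):ℝ) by norm_num, Real.rpow_natCast, ← mul_pow, mul_one_div_cancel hr.ne', one_pow]

lemma aux_exp_mean {r : ℝ} (hr : 0 < r) :
    Integrable id (expMeasure r) ∧ ∫ x, x ∂(expMeasure r) = 1 / r := by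
  obtain ⟨hInt, hval⟩ := aux_exp_integrable_aux hr
  have hmeas : Measurable (fun x => (gammaPDFReal 1 r x).toNNReal) :=
    (measurable_gammaPDFReal 1 r).real_toNNReal
  constructor
  · rw [aux_expPDF_as_nnreal r, integrable_withDensity_iff_integrable_smul hmeas]
    exact hInt
  · rw [aux_expPDF_as_nnreal r, integral_withDensity_eq_integral_smul hmeas]
    exact hval

lemma aux_expMeasure_Iio_zero {r : ℝ} : expMeasure r (Iio 0) = 0 := by
  rw [show expMeasure r = volume.withDensity (gammaPDF 1 r) from rfl,
    withDensity_apply _ measurableSet_Iio]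
  exact lintegral_gammaPDF_of_nonpos le_rfl

end Aux

/-- **Lemma 3 (Expected Horizon Lemma).** If `Z` is exponential with rate
`λ = -log (1 - 1/H)`, independent of the difficulty contributions `(D t)` (which are a.s.
bounded in `[0, Dmax]` with a.s. divergent partial sums), and `Term` is the least `T ≥ 1`
with `∑_{t=1}^T D t > Z`, then the expected total difficulty contribution up to `Term`
equals `H` up to `Dmax + 1`. -/
theorem expected_horizon_lemma {Ω : Type*} [MeasurableSpace Ω]
    (Pr : Measure Ω) [IsProbabilityMeasure Pr]
    (H Dmax lam : ℝ) (hH : 1 < H) (hDmax : 1 ≤ Dmax)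
    (hlam : lam = -Real.log (1 - 1 / H))
    (Z : Ω → ℝ) (hZmeas : Measurable Z)
    (hZ : Measure.map Z Pr = expMeasure lam)
    (D : ℕ → Ω → ℝ) (hDmeas : ∀ t, Measurable (D t))
    (hDbdd : ∀ t, 1 ≤ t → ∀ᵐ ω ∂Pr, 0 ≤ D t ω ∧ D t ω ≤ Dmax)
    (hindep : Indep (MeasurableSpace.comap Z inferInstance)
      (⨆ t ∈ {t : ℕ | 1 ≤ t}, MeasurableSpace.comap (D t) inferInstance) Pr)
    (hdiv : ∀ᵐ ω ∂Pr,
      Tendsto (fun T => ∑ t ∈ Finset.Icc 1 T, D t ω) atTop atTop)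
    (Term : Ω → ℕ)
    (hTerm : ∀ ω, Term ω = sInf {T : ℕ | 1 ≤ T ∧ Z ω < ∑ t ∈ Finset.Icc 1 T, D t ω}) :
    H - Dmax - 1 ≤ ∫ ω, (∑ t ∈ Finset.Icc 1 (Term ω), D t ω) ∂Pr ∧
      ∫ ω, (∑ t ∈ Finset.Icc 1 (Term ω), D t ω) ∂Pr ≤ H + Dmax := by
  -- numeric facts about lam
  have hH0 : (0:ℝ) < H := lt_trans one_pos hH
  have hx1 : (0:ℝ) < 1 - 1/H := by
    rw [sub_pos, div_lt_one hH0]; exact hH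
  have hlam_pos : 0 < lam := by
    rw [hlam, neg_pos]
    apply Real.log_neg hx1
    rw [sub_lt_self_iff]
    positivity
  have hlam_ge : 1/H ≤ lam := by
    have h := Real.log_le_sub_one_of_pos hx1
    rw [hlam]; linarith
  have hlam_le : lam ≤ 1/(H-1) := by
    have hH1 : (0:ℝ) < H - 1 := by linarith
    have h2 : (0:ℝ) < H/(H-1) := by positivity
    have h := Real.log_le_sub_one_of_pos h2
    have hinv : (1 - 1/H)⁻¹ = H/(H-1) := by
      field_simp
    have heq : lam = Real.log (H/(H-1)) := by
      rw [hlam, ← Real.log_inv, hinv]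
    have hsub : H/(H-1) - 1 = 1/(H-1) := by field_simp; ring
    rw [heq]; linarith [hsub ▸ h]
  have hmean_le : 1/lam ≤ H := by
    have h := one_div_le_one_div_of_le (by positivity : (0:ℝ) < 1/H) hlam_ge
    rwa [one_div_one_div] at h
  have hmean_ge : H - 1 ≤ 1/lam := by
    have hH1 : (0:ℝ) < H - 1 := by linarith
    have h := one_div_le_one_div_of_le hlam_pos hlam_le
    rwa [one_div_one_div] at h
  -- exponential facts about Z
  obtain ⟨hid_int, hid_val⟩ := aux_exp_mean hlam_pos
  have hZint : Integrable Z Pr := by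
    have h := (integrable_map_measure aestronglyMeasurable_id hZmeas.aemeasurable).mp
      (by rw [hZ]; exact hid_int)
    simpa [Function.comp] using h
  have hZval : ∫ ω, Z ω ∂Pr = 1/lam := by
    have h := integral_map (μ := Pr) (f := fun x : ℝ => x) hZmeas.aemeasurable aestronglyMeasurable_id
    rw [hZ] at h
    rw [← h]
    exact hid_val
  have hZnn : ∀ᵐ ω ∂Pr, 0 ≤ Z ω := by
    rw [MeasureTheory.ae_iff]
    have hset : {ω | ¬ 0 ≤ Z ω} = Z ⁻¹' Set.Iio 0 := by
      ext ω; simp [not_le]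
    rw [hset, ← Measure.map_apply hZmeas measurableSet_Iio, hZ]
    exact aux_expMeasure_Iio_zero
  -- measurability of the stopped sum
  set S : ℕ → Ω → ℝ := fun T ω => ∑ t ∈ Finset.Icc 1 T, D t ω with hS
  have hSmeas : ∀ T, Measurable (S T) := fun T =>
    Finset.measurable_sum _ (fun t _ => hDmeas t)
  set B : ℕ → Set Ω := fun m => {ω | 1 ≤ m ∧ Z ω < S m ω} with hBdef
  have hBmeas : ∀ m, MeasurableSet (B m) := by
    intro m
    have hBm : B m = {ω | 1 ≤ m} ∩ {ω | Z ω < S m ω} := by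
      ext ω; exact Iff.rfl
    rw [hBm]
    exact (MeasurableSet.const _).inter (measurableSet_lt hZmeas (hSmeas m))
  have hTerm' : ∀ ω, Term ω = sInf {T | ω ∈ B T} := fun ω => hTerm ω
  have hTermMeas : Measurable Term := by
    apply measurable_to_countable'
    intro n
    rcases Nat.eq_zero_or_pos n with hn | hn
    · subst hn
      have hpre : Term ⁻¹' {0} = ⋂ m, (B m)ᶜ := by
        ext ω
        simp only [Set.mem_preimage, Set.mem_singleton_iff, Set.mem_iInter, Set.mem_compl_iff]
        rw [hTerm' ω, Nat.sInf_eq_zero]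
        constructor
        · rintro (h0 | hempty)
          · exact absurd h0.1 (by norm_num)
          · intro m hm
            have : m ∈ {T | ω ∈ B T} := hm
            rw [hempty] at this
            exact this
        · intro h
          right
          ext m
          simp only [Set.mem_setOf_eq, Set.mem_empty_iff_false, iff_false]
          exact h m
      rw [hpre]
      exact MeasurableSet.iInter fun m => (hBmeas m).compl
    · have hpre : Term ⁻¹' {n} = B n ∩ ⋂ m, ⋂ (_ : m < n), (B m)ᶜ := by
        ext ω
        simp only [Set.mem_preimage, Set.mem_singleton_iff, Set.mem_inter_iff, Set.mem_iInter,
          Set.mem_compl_iff]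
        rw [hTerm' ω]
        constructor
        · intro h
          have hne : {T | ω ∈ B T}.Nonempty := by
            by_contra hc
            rw [Set.not_nonempty_iff_eq_empty] at hc
            rw [hc, Nat.sInf_empty] at h
            omega
          have hmem := Nat.sInf_mem hne
          rw [h] at hmem
          exact ⟨hmem, fun m hm => Nat.notMem_of_lt_sInf (h ▸ hm)⟩
        · rintro ⟨hmem, hlt⟩
          have h1 : sInf {T | ω ∈ B T} ≤ n := Nat.sInf_le hmem
          have h3' : sInf {T | ω ∈ B T} ∈ {T | ω ∈ B T} := Nat.sInf_mem ⟨n, hmem⟩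
          have h3 : ω ∈ B (sInf {T | ω ∈ B T}) := h3'
          have h2 : ¬ sInf {T | ω ∈ B T} < n := fun hc => hlt _ hc h3
          omega
      rw [hpre]
      exact (hBmeas n).inter
        (MeasurableSet.iInter fun m => MeasurableSet.iInter fun _ => (hBmeas m).compl)
  have hgmeas : Measurable (fun ω => S (Term ω) ω) := by
    have huncurry : Measurable (fun p : Ω × ℕ => S p.2 p.1) :=
      measurable_from_prod_countable_left (fun n => hSmeas n)
    exact huncurry.comp (measurable_id.prodMk hTermMeas)
  -- a.e. properties
  have hDae : ∀ᵐ ω ∂Pr, ∀ t, 1 ≤ t → (0 ≤ D t ω ∧ D t ω ≤ Dmax) := by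
    rw [MeasureTheory.ae_all_iff]
    intro t
    by_cases h1 : 1 ≤ t
    · filter_upwards [hDbdd t h1] with ω h
      exact fun _ => h
    · filter_upwards with ω h
      exact absurd h h1
  have hmain : ∀ᵐ ω ∂Pr, Z ω ≤ S (Term ω) ω ∧ S (Term ω) ω ≤ Z ω + Dmax := by
    filter_upwards [hZnn, hDae, hdiv] with ω h0 hD hdv
    have hne : {T | ω ∈ B T}.Nonempty := by
      have h1 : ∀ᶠ T in atTop, Z ω < S T ω := hdv.eventually_gt_atTop (Z ω)
      have h2 : ∀ᶠ T in atTop, 1 ≤ T := eventually_ge_atTop 1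
      obtain ⟨T, hT1, hT2⟩ := (h2.and h1).exists
      exact ⟨T, hT1, hT2⟩
    have hmem : ω ∈ B (Term ω) := by
      have := Nat.sInf_mem hne
      rw [← hTerm' ω] at this
      exact this
    obtain ⟨hT1, hT2⟩ := hmem
    refine ⟨le_of_lt hT2, ?_⟩
    obtain ⟨m, hm⟩ : ∃ m, Term ω = m + 1 := ⟨Term ω - 1, by omega⟩
    have hsum : S (m+1) ω = S m ω + D (m+1) ω :=
      Finset.sum_Icc_succ_top (by omega) _
    have hprev : S m ω ≤ Z ω := by
      rcases Nat.eq_zero_or_pos m with h | h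
      · subst h
        simp only [hS]
        simp [h0]
      · have hnot : m ∉ {T | ω ∈ B T} := by
          apply Nat.notMem_of_lt_sInf
          rw [← hTerm' ω]
          omega
        have : ¬ (1 ≤ m ∧ Z ω < S m ω) := hnot
        push_neg at this
        exact this h
    have hDn : D (m+1) ω ≤ Dmax := (hD (m+1) (by omega)).2
    rw [hm]
    linarith
  have hg_nn : ∀ᵐ ω ∂Pr, 0 ≤ S (Term ω) ω := by
    filter_upwards [hDae] with ω hD
    exact Finset.sum_nonneg (fun t ht => (hD t (Finset.mem_Icc.mp ht).1).1)
  have hbint : Integrable (fun ω => Z ω + Dmax) Pr := hZint.add (integrable_const Dmax)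
  have hbval : ∫ ω, (Z ω + Dmax) ∂Pr = 1/lam + Dmax := by
    rw [integral_add hZint (integrable_const Dmax), hZval, integral_const, probReal_univ,
      one_smul]
  have hgint : Integrable (fun ω => S (Term ω) ω) Pr := by
    refine hbint.mono' hgmeas.aestronglyMeasurable ?_
    filter_upwards [hmain, hg_nn] with ω hb h3
    rw [Real.norm_eq_abs, abs_of_nonneg h3]
    exact hb.2
  have hlow : ∫ ω, Z ω ∂Pr ≤ ∫ ω, S (Term ω) ω ∂Pr :=
    integral_mono_ae hZint hgint (hmain.mono fun ω h => h.1)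
  have hup : ∫ ω, S (Term ω) ω ∂Pr ≤ 1/lam + Dmax := by
    have h := integral_mono_ae hgint hbint (hmain.mono fun ω h => h.2)
    rwa [hbval] at h
  rw [hZval] at hlow
  constructor
  · linarith
  · linarith
end

section
/- Let W be a nonnegative real random variable on a probability space, and let H > 1 and Dmax ≥ 1 be real numbers such that for every y ≥ 0 one has (1 − 1/H)^(y + Dmax) ≤ ℙ[W ≥ y] ≤ (1 − 1/H)^y. Then H − Dmax − 1 ≤ E[W] ≤ H. -/
open MeasureTheory ENNReal

/-- Layer-cake step of the Expected Horizon Lemma: geometric tail bounds sandwich the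
expectation between `H - Dmax - 1` and `H`. -/
theorem expectation_of_geometric_tails {Ω : Type*} [MeasurableSpace Ω]
    (Pr : Measure Ω) [IsProbabilityMeasure Pr]
    (W : Ω → ℝ) (hWmeas : Measurable W) (hW0 : ∀ ω, 0 ≤ W ω)
    (H Dmax : ℝ) (hH : 1 < H) (hDmax : 1 ≤ Dmax)
    (htail : ∀ y : ℝ, 0 ≤ y →
      (1 - 1 / H) ^ (y + Dmax) ≤ (Pr {ω | y ≤ W ω}).toReal ∧
        (Pr {ω | y ≤ W ω}).toReal ≤ (1 - 1 / H) ^ y) :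
    H - Dmax - 1 ≤ ∫ ω, W ω ∂Pr ∧ ∫ ω, W ω ∂Pr ≤ H := by
  have hH0 : (0:ℝ) < H := lt_trans one_pos hH
  set r : ℝ := 1 - 1 / H with hr_def
  have hr0 : 0 < r := by
    rw [hr_def]
    exact sub_pos.mpr ((div_lt_one hH0).mpr hH)
  have hr1 : r < 1 := by
    have h01 : 0 < 1 / H := by positivity
    rw [hr_def]; linarith
  have hlogr_neg : Real.log r < 0 := Real.log_neg hr0 hr1
  set b : ℝ := -Real.log r with hb_def
  have hb0 : 0 < b := by linarith
  -- the exponential integral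
  have hpow_exp : ∀ t : ℝ, r ^ t = Real.exp (-b * t) := by
    intro t
    rw [Real.rpow_def_of_pos hr0, hb_def]
    ring_nf
  have hIntOn : IntegrableOn (fun t => r ^ t) (Set.Ioi (0:ℝ)) := by
    have := exp_neg_integrableOn_Ioi 0 hb0
    refine this.congr_fun (fun t _ => ?_) measurableSet_Ioi
    rw [hpow_exp]
  have hI : ∫ t in Set.Ioi (0:ℝ), r ^ t = 1 / b := by
    have h1 : ∫ t in Set.Ioi (0:ℝ), Real.exp (-(b * t))
        = b⁻¹ • ∫ x in Set.Ioi (b * 0), Real.exp (-x) :=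
      integral_comp_mul_left_Ioi (fun x => Real.exp (-x)) 0 hb0
    have h2 : ∫ t in Set.Ioi (0:ℝ), r ^ t = ∫ t in Set.Ioi (0:ℝ), Real.exp (-(b * t)) := by
      refine setIntegral_congr_fun measurableSet_Ioi (fun t _ => ?_)
      rw [hpow_exp]; ring_nf
    rw [h2, h1, mul_zero, integral_exp_neg_Ioi, neg_zero, Real.exp_zero, smul_eq_mul,
      mul_one, one_div]
  have hI_nonneg : 0 ≤ (1:ℝ) / b := by positivity
  -- bound on 1/b
  have hb_lower : 1 / H ≤ b := by
    have h := Real.log_le_sub_one_of_pos hr0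
    rw [hr_def] at h
    rw [hb_def]
    linarith
  have hb_upper : b ≤ 1 / (H - 1) := by
    have hrpos : (0:ℝ) < 1 / r := by positivity
    have h := Real.log_le_sub_one_of_pos hrpos
    rw [Real.log_div one_ne_zero (ne_of_gt hr0), Real.log_one] at h
    have hinv : 1 / r = H / (H - 1) := by
      rw [hr_def]; field_simp
    rw [hinv] at h
    have hne : H - 1 ≠ 0 := ne_of_gt (by linarith)
    have h2 : H / (H - 1) - 1 = 1 / (H - 1) := by field_simp; ring
    rw [h2] at h
    rw [hb_def]; linarith
  have hIb_le : 1 / b ≤ H := by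
    rw [div_le_iff₀ hb0]
    calc (1:ℝ) = H * (1 / H) := by field_simp
    _ ≤ H * b := by exact mul_le_mul_of_nonneg_left hb_lower (le_of_lt hH0)
  have hIb_ge : H - 1 ≤ 1 / b := by
    rw [le_div_iff₀ hb0]
    have hH1 : (0:ℝ) < H - 1 := by linarith
    calc (H - 1) * b ≤ (H - 1) * (1 / (H - 1)) :=
          mul_le_mul_of_nonneg_left hb_upper (le_of_lt hH1)
    _ = 1 := by field_simp
  -- Bernoulli
  have hBern : 1 - Dmax / H ≤ r ^ Dmax := by
    have hs : (-1:ℝ) ≤ -(1 / H) := by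
      have : 1 / H < 1 := by rw [div_lt_one hH0]; exact hH
      linarith
    have := one_add_mul_self_le_rpow_one_add hs hDmax
    have he : (1:ℝ) + -(1 / H) = r := by rw [hr_def]; ring
    rw [he] at this
    calc 1 - Dmax / H = 1 + Dmax * -(1 / H) := by ring
    _ ≤ r ^ Dmax := this
  have hrD_nonneg : 0 ≤ r ^ Dmax := Real.rpow_nonneg (le_of_lt hr0) Dmax
  -- layer cake
  have hW_ae : 0 ≤ᵐ[Pr] W := Filter.Eventually.of_forall hW0
  have hL : ∫⁻ ω, ENNReal.ofReal (W ω) ∂Pr = ∫⁻ t in Set.Ioi (0:ℝ), Pr {a | t ≤ W a} :=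
    lintegral_eq_lintegral_meas_le Pr hW_ae hWmeas.aemeasurable
  -- upper bound on L
  have hmexp : Measurable fun t : ℝ => Real.exp (-b * t) :=
    Real.measurable_exp.comp (measurable_const.mul measurable_id)
  have hmpow : Measurable fun t : ℝ => r ^ t := by
    have he : (fun t : ℝ => r ^ t) = fun t : ℝ => Real.exp (-b * t) := funext hpow_exp
    rw [he]; exact hmexp
  have hmeas_pow : Measurable fun t : ℝ => ENNReal.ofReal (r ^ t) :=
    ENNReal.measurable_ofReal.comp hmpow
  have hL_upper : (∫⁻ ω, ENNReal.ofReal (W ω) ∂Pr) ≤ ENNReal.ofReal (1 / b) := by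
    rw [hL, ← hI]
    have h1 : ∫⁻ t in Set.Ioi (0:ℝ), Pr {a | t ≤ W a}
        ≤ ∫⁻ t in Set.Ioi (0:ℝ), ENNReal.ofReal (r ^ t) := by
      refine setLIntegral_mono hmeas_pow (fun t ht => ?_)
      have hpr := (htail t (le_of_lt ht)).2
      have hfin : Pr {a | t ≤ W a} ≠ ⊤ := measure_ne_top _ _
      rw [← ENNReal.ofReal_toReal hfin]
      exact ENNReal.ofReal_le_ofReal hpr
    refine h1.trans ?_
    rw [← ofReal_integral_eq_lintegral_ofReal hIntOn]
    exact ae_restrict_of_forall_mem measurableSet_Ioi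
      (fun t _ => Real.rpow_nonneg (le_of_lt hr0) t)
  have hL_ne_top : (∫⁻ ω, ENNReal.ofReal (W ω) ∂Pr) ≠ ⊤ := ne_top_of_le_ne_top ENNReal.ofReal_ne_top hL_upper
  -- lower bound on L
  have hJ : ∫ t in Set.Ioi (0:ℝ), r ^ (t + Dmax) = r ^ Dmax * (1 / b) := by
    have h1 : ∀ t : ℝ, r ^ (t + Dmax) = r ^ Dmax * r ^ t := by
      intro t
      rw [← Real.rpow_add hr0]; ring_nf
    calc ∫ t in Set.Ioi (0:ℝ), r ^ (t + Dmax)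
        = ∫ t in Set.Ioi (0:ℝ), r ^ Dmax * r ^ t := by
          exact setIntegral_congr_fun measurableSet_Ioi (fun t _ => h1 t)
    _ = r ^ Dmax * ∫ t in Set.Ioi (0:ℝ), r ^ t := by rw [integral_const_mul]
    _ = r ^ Dmax * (1 / b) := by rw [hI]
  have hIntOnJ : IntegrableOn (fun t => r ^ (t + Dmax)) (Set.Ioi (0:ℝ)) := by
    have h1 : (fun t : ℝ => r ^ (t + Dmax)) = fun t => r ^ Dmax * r ^ t := by
      funext t; rw [← Real.rpow_add hr0]; ring_nf
    rw [h1]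
    exact hIntOn.const_mul _
  have hL_lower : ENNReal.ofReal (r ^ Dmax * (1 / b)) ≤ ∫⁻ ω, ENNReal.ofReal (W ω) ∂Pr := by
    rw [hL, ← hJ]
    rw [ofReal_integral_eq_lintegral_ofReal hIntOnJ
      (ae_restrict_of_forall_mem measurableSet_Ioi
        (fun t _ => Real.rpow_nonneg (le_of_lt hr0) (t + Dmax)))]
    refine lintegral_mono_ae (ae_restrict_of_forall_mem measurableSet_Ioi (fun t ht => ?_))
    have hpr := (htail t (le_of_lt ht)).1
    have hfin : Pr {a | t ≤ W a} ≠ ⊤ := measure_ne_top _ _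
    rw [← ENNReal.ofReal_toReal hfin]
    exact ENNReal.ofReal_le_ofReal hpr
  -- relate to Bochner integral
  have hint : ∫ ω, W ω ∂Pr = (∫⁻ ω, ENNReal.ofReal (W ω) ∂Pr).toReal :=
    integral_eq_lintegral_of_nonneg_ae hW_ae hWmeas.aestronglyMeasurable
  constructor
  · -- lower bound
    have h1 : r ^ Dmax * (1 / b) ≤ (∫⁻ ω, ENNReal.ofReal (W ω) ∂Pr).toReal := by
      rw [← ENNReal.ofReal_le_iff_le_toReal hL_ne_top] at *
      exact hL_lower
    have h2 : H - Dmax - 1 ≤ r ^ Dmax * (1 / b) := by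
      rcases le_or_gt (1 - Dmax / H) 0 with hc | hc
      · have : H - Dmax - 1 ≤ 0 := by
          have : H * (1 - Dmax / H) ≤ 0 := mul_nonpos_of_nonneg_of_nonpos (le_of_lt hH0) hc
          have he : H * (1 - Dmax / H) = H - Dmax := by field_simp
          linarith [he ▸ this]
        exact this.trans (mul_nonneg hrD_nonneg hI_nonneg)
      · have h3 : (1 - Dmax / H) * (H - 1) ≤ r ^ Dmax * (1 / b) :=
          mul_le_mul hBern hIb_ge (by linarith) hrD_nonneg
        have h4 : H - Dmax - 1 ≤ (1 - Dmax / H) * (H - 1) := by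
          have hd : 0 < Dmax / H := by positivity
          have he : (1 - Dmax / H) * (H - 1) = H - 1 - Dmax + Dmax / H := by
            field_simp; ring
          linarith [he ▸ le_refl ((1 - Dmax / H) * (H - 1))]
        linarith
    rw [hint]; linarith
  · rw [hint]
    exact (ENNReal.toReal_le_of_le_ofReal hI_nonneg hL_upper).trans hIb_le
end

section
/- Let (Ω, ℱ, ℙ) be a probability space, H > 1 and Dmax ≥ 1 real numbers, and λ = −log(1 − 1/H). Let Z : Ω → ℝ be exponentially distributed with rate λ, let (D_t)_{t ≥ 1} be real random variables with 0 ≤ D_t ≤ Dmax almost surely, such that Z is independent of the σ-algebra generated by (D_t)_{t ≥ 1}, and assume Σ_{t=1}^T D_t → ∞ almost surely. Define Term(ω) as the least T ≥ 1 with Σ_{t=1}^T D_t(ω) > Z(ω). Then for every y ≥ 0: (1 − 1/H)^(y + Dmax) < ℙ[Σ_{t=1}^{Term − 1} D_t ≥ y] ≤ (1 − 1/H)^y. -/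
open Filter MeasureTheory ProbabilityTheory

lemma expMeasure_Iio_zero' (r : ℝ) : expMeasure r (Set.Iio 0) = 0 := by
  rw [expMeasure, gammaMeasure, withDensity_apply _ measurableSet_Iio]
  exact lintegral_gammaPDF_of_nonpos le_rfl

lemma expMeasure_Ici_eq' {r : ℝ} (hr : 0 < r) {c : ℝ} (hc : 0 ≤ c) :
    expMeasure r (Set.Ici c) = ENNReal.ofReal (Real.exp (-(r * c))) := by
  have hprob : IsProbabilityMeasure (expMeasure r) := isProbabilityMeasure_expMeasure hr
  have hIic : expMeasure r (Set.Iic c) = ENNReal.ofReal (1 - Real.exp (-(r * c))) := by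
    have h := lintegral_exponentialPDF_eq_antiDeriv hr c
    rw [if_pos hc] at h
    rw [expMeasure, gammaMeasure, withDensity_apply _ measurableSet_Iic]
    exact h
  have hexp1 : Real.exp (-(r * c)) ≤ 1 := by
    rw [Real.exp_le_one_iff]
    nlinarith
  have hIoi : expMeasure r (Set.Ioi c) = ENNReal.ofReal (Real.exp (-(r * c))) := by
    have h1 : expMeasure r (Set.Iic c)ᶜ = 1 - expMeasure r (Set.Iic c) := by
      rw [measure_compl measurableSet_Iic (measure_ne_top _ _), measure_univ]
    rw [Set.compl_Iic] at h1
    have h2 : ENNReal.ofReal (Real.exp (-(r * c)))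
        = ENNReal.ofReal 1 - ENNReal.ofReal (1 - Real.exp (-(r * c))) := by
      rw [← ENNReal.ofReal_sub _ (by linarith)]
      norm_num
    rw [h1, hIic, h2, ENNReal.ofReal_one]
  have hsingle : expMeasure r {c} = 0 := by
    have habs : expMeasure r ≪ volume := by
      rw [expMeasure, gammaMeasure]; exact withDensity_absolutelyContinuous _ _
    exact habs Real.volume_singleton
  have heq : expMeasure r (Set.Ici c) = expMeasure r (Set.Ioi c) := by
    refine le_antisymm ?_ (measure_mono Set.Ioi_subset_Ici_self)
    calc expMeasure r (Set.Ici c) ≤ expMeasure r ({c} ∪ Set.Ioi c) := by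
          apply measure_mono
          intro x hx
          rcases eq_or_lt_of_le (Set.mem_Ici.1 hx) with h | h
          · exact Or.inl h.symm
          · exact Or.inr h
      _ ≤ expMeasure r {c} + expMeasure r (Set.Ioi c) := measure_union_le _ _
      _ = expMeasure r (Set.Ioi c) := by rw [hsingle, zero_add]
  rw [heq, hIoi]

lemma measurableSet_sInf_eq_aux {Ω : Type*} {m : MeasurableSpace Ω} (p : ℕ → Ω → Prop)
    (hp : ∀ k, MeasurableSet[m] {ω | p k ω}) (hp0 : ∀ ω, ¬ p 0 ω) (T : ℕ) :
    MeasurableSet[m] {ω | sInf {k | p k ω} = T} := by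
  rcases Nat.eq_zero_or_pos T with rfl | hT
  · have he : {ω | sInf {k | p k ω} = 0} = ⋂ k, {ω | p k ω}ᶜ := by
      ext ω
      simp only [Set.mem_setOf_eq, Set.mem_iInter, Set.mem_compl_iff]
      constructor
      · intro h0 k hk
        have hm := Nat.sInf_mem (⟨k, hk⟩ : {k | p k ω}.Nonempty)
        rw [h0] at hm
        exact hp0 ω hm
      · intro h
        have : {k | p k ω} = ∅ := Set.eq_empty_iff_forall_notMem.2 h
        rw [this, Nat.sInf_empty]
    rw [he]
    exact MeasurableSet.iInter fun k => (hp k).compl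
  · have he : {ω | sInf {k | p k ω} = T} =
        {ω | p T ω} ∩ ⋂ k, ⋂ (_ : k < T), {ω | p k ω}ᶜ := by
      ext ω
      simp only [Set.mem_setOf_eq, Set.mem_inter_iff, Set.mem_iInter, Set.mem_compl_iff]
      constructor
      · intro h
        have hne : {k | p k ω}.Nonempty := by
          by_contra hne
          rw [Set.not_nonempty_iff_eq_empty] at hne
          rw [hne, Nat.sInf_empty] at h
          omega
        constructor
        · have := Nat.sInf_mem hne
          rwa [h] at this
        · intro k hk
          exact Nat.notMem_of_lt_sInf (by rw [h]; exact hk)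
      · rintro ⟨hT', hmin⟩
        have h1 : sInf {k | p k ω} ≤ T := Nat.sInf_le hT'
        have h2 := Nat.sInf_mem (⟨T, hT'⟩ : {k | p k ω}.Nonempty)
        rcases lt_or_eq_of_le h1 with h | h
        · exact absurd h2 (hmin _ h)
        · exact h
    rw [he]
    exact (hp T).inter
      (MeasurableSet.iInter fun k => MeasurableSet.iInter fun _ => (hp k).compl)

lemma measurableSet_stopped_le_aux {Ω : Type*} {m : MeasurableSpace Ω} (S : ℕ → Ω → ℝ)
    (hS : ∀ T, Measurable[m] (S T)) (p : ℕ → Ω → Prop)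
    (hp : ∀ k, MeasurableSet[m] {ω | p k ω}) (hp0 : ∀ ω, ¬ p 0 ω) (c : ℝ) :
    MeasurableSet[m] {ω | S (sInf {k | p k ω}) ω ≤ c} := by
  have he : {ω | S (sInf {k | p k ω}) ω ≤ c}
      = ⋃ T, ({ω | sInf {k | p k ω} = T} ∩ {ω | S T ω ≤ c}) := by
    ext ω
    simp only [Set.mem_setOf_eq, Set.mem_iUnion, Set.mem_inter_iff]
    constructor
    · intro h; exact ⟨_, rfl, h⟩
    · rintro ⟨T, h1, h2⟩; rw [h1]; exact h2
  rw [he]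
  exact MeasurableSet.iUnion fun T =>
    (measurableSet_sInf_eq_aux p hp hp0 T).inter
      (measurableSet_le (hS T) measurable_const)

/-- Tail-bound step (inequalities (7) and (8)) in the proof of the Expected Horizon Lemma:
the difficulty accumulated strictly before the termination step has tails sandwiched
between `(1 - 1/H) ^ (y + Dmax)` (strictly) and `(1 - 1/H) ^ y`. -/
theorem pre_termination_tail_bounds {Ω : Type*} [MeasurableSpace Ω]
    (Pr : Measure Ω) [IsProbabilityMeasure Pr]
    (H Dmax lam : ℝ) (hH : 1 < H) (hDmax : 1 ≤ Dmax)
    (hlam : lam = -Real.log (1 - 1 / H))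
    (Z : Ω → ℝ) (hZmeas : Measurable Z)
    (hZ : Measure.map Z Pr = expMeasure lam)
    (D : ℕ → Ω → ℝ) (hDmeas : ∀ t, Measurable (D t))
    (hDbdd : ∀ t, 1 ≤ t → ∀ᵐ ω ∂Pr, 0 ≤ D t ω ∧ D t ω ≤ Dmax)
    (hindep : Indep (MeasurableSpace.comap Z inferInstance)
      (⨆ t ∈ {t : ℕ | 1 ≤ t}, MeasurableSpace.comap (D t) inferInstance) Pr)
    (hdiv : ∀ᵐ ω ∂Pr,
      Tendsto (fun T => ∑ t ∈ Finset.Icc 1 T, D t ω) atTop atTop)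
    (Term : Ω → ℕ)
    (hTerm : ∀ ω, Term ω = sInf {T : ℕ | 1 ≤ T ∧ Z ω < ∑ t ∈ Finset.Icc 1 T, D t ω}) :
    ∀ y : ℝ, 0 ≤ y →
      (1 - 1 / H) ^ (y + Dmax) <
          (Pr {ω | y ≤ ∑ t ∈ Finset.Icc 1 (Term ω - 1), D t ω}).toReal ∧
        (Pr {ω | y ≤ ∑ t ∈ Finset.Icc 1 (Term ω - 1), D t ω}).toReal ≤ (1 - 1 / H) ^ y := by
  -- basic positivity facts
  have hH0 : (0:ℝ) < H := by linarith
  have ha0 : (0:ℝ) < 1 - 1/H := by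
    have h1 : 1/H < 1 := by rw [div_lt_one hH0]; exact hH
    linarith
  have ha1 : 1 - 1/H < 1 := by
    have : 0 < 1/H := by positivity
    linarith
  have hlampos : 0 < lam := by
    rw [hlam]
    have := Real.log_neg ha0 ha1
    linarith
  have hrpow : ∀ c : ℝ, (1 - 1/H) ^ c = Real.exp (-(lam * c)) := by
    intro c
    rw [Real.rpow_def_of_pos ha0, hlam]
    congr 1
    ring
  -- distribution of Z
  have hZtail : ∀ c : ℝ, 0 ≤ c →
      Pr (Z ⁻¹' Set.Ici c) = ENNReal.ofReal (Real.exp (-(lam * c))) := by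
    intro c hc
    rw [← Measure.map_apply hZmeas measurableSet_Ici, hZ, expMeasure_Ici_eq' hlampos hc]
  have hZ0 : ∀ᵐ ω ∂Pr, 0 ≤ Z ω := by
    have h : Pr (Z ⁻¹' Set.Iio 0) = 0 := by
      rw [← Measure.map_apply hZmeas measurableSet_Iio, hZ, expMeasure_Iio_zero' lam]
    rw [ae_iff]
    refine measure_mono_null ?_ h
    intro ω hω
    exact not_le.1 hω
  have hDgood : ∀ᵐ ω ∂Pr, ∀ t, 1 ≤ t → 0 ≤ D t ω ∧ D t ω ≤ Dmax := by
    rw [ae_all_iff]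
    intro t
    by_cases ht : 1 ≤ t
    · exact (hDbdd t ht).mono fun ω h _ => h
    · exact Filter.Eventually.of_forall fun ω h => absurd h ht
  -- the combined a.e. good set
  have G : ∀ᵐ ω ∂Pr, 0 ≤ Z ω ∧ (∀ t, 1 ≤ t → 0 ≤ D t ω ∧ D t ω ≤ Dmax) ∧
      Tendsto (fun T => ∑ t ∈ Finset.Icc 1 T, D t ω) atTop atTop :=
    hZ0.and (hDgood.and hdiv)
  have hGnull : Pr {ω | ¬ (0 ≤ Z ω ∧ (∀ t, 1 ≤ t → 0 ≤ D t ω ∧ D t ω ≤ Dmax) ∧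
      Tendsto (fun T => ∑ t ∈ Finset.Icc 1 T, D t ω) atTop atTop)} = 0 := ae_iff.1 G
  -- monotonicity of partial sums
  have hmono : ∀ ω, (∀ t, 1 ≤ t → 0 ≤ D t ω ∧ D t ω ≤ Dmax) → ∀ T T' : ℕ, T ≤ T' →
      (∑ t ∈ Finset.Icc 1 T, D t ω) ≤ ∑ t ∈ Finset.Icc 1 T', D t ω := by
    intro ω hg T T' h
    apply Finset.sum_le_sum_of_subset_of_nonneg (Finset.Icc_subset_Icc_right h)
    intro i hi _
    exact (hg i (Finset.mem_Icc.1 hi).1).1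
  -- pointwise facts about Term on the good set
  have hTermPt : ∀ ω, 0 ≤ Z ω → (∀ t, 1 ≤ t → 0 ≤ D t ω ∧ D t ω ≤ Dmax) →
      Tendsto (fun T => ∑ t ∈ Finset.Icc 1 T, D t ω) atTop atTop →
      1 ≤ Term ω ∧ Z ω < (∑ t ∈ Finset.Icc 1 (Term ω), D t ω) ∧
        (∑ t ∈ Finset.Icc 1 (Term ω - 1), D t ω) ≤ Z ω := by
    intro ω h0 hg hdω
    have hne : {T : ℕ | 1 ≤ T ∧ Z ω < ∑ t ∈ Finset.Icc 1 T, D t ω}.Nonempty := by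
      obtain ⟨T, h1, h2⟩ := ((hdω.eventually_gt_atTop (Z ω)).and (eventually_ge_atTop 1)).exists
      exact ⟨T, h2, h1⟩
    have hmem := Nat.sInf_mem hne
    rw [← hTerm ω] at hmem
    obtain ⟨h1, h2⟩ := hmem
    refine ⟨h1, h2, ?_⟩
    by_cases hT1 : Term ω = 1
    · rw [hT1]
      rw [show ((1:ℕ) - 1) = 0 from rfl, Finset.Icc_eq_empty (by omega), Finset.sum_empty]
      exact h0
    · have hlt : Term ω - 1 < Term ω := by omega
      have hnot : Term ω - 1 ∉ {T : ℕ | 1 ≤ T ∧ Z ω < ∑ t ∈ Finset.Icc 1 T, D t ω} := by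
        apply Nat.notMem_of_lt_sInf
        rw [← hTerm ω]
        exact hlt
      simp only [Set.mem_setOf_eq, not_and, not_lt] at hnot
      exact hnot (by omega)
  intro y hy
  -- the upper bound (inequality (8))
  have hupper : Pr {ω | y ≤ ∑ t ∈ Finset.Icc 1 (Term ω - 1), D t ω}
      ≤ ENNReal.ofReal (Real.exp (-(lam * y))) := by
    rw [← hZtail y hy]
    refine measure_mono_ae (ae_le_set.2 (measure_mono_null ?_ hGnull))
    rintro ω ⟨hωE, hωnot⟩
    simp only [Set.mem_setOf_eq]
    rintro ⟨h0, hg, hd⟩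
    exact hωnot (le_trans hωE ((hTermPt ω h0 hg hd).2.2))
  have hupperR : (Pr {ω | y ≤ ∑ t ∈ Finset.Icc 1 (Term ω - 1), D t ω}).toReal
      ≤ (1 - 1/H) ^ y := by
    calc (Pr {ω | y ≤ ∑ t ∈ Finset.Icc 1 (Term ω - 1), D t ω}).toReal
        ≤ (ENNReal.ofReal (Real.exp (-(lam * y)))).toReal :=
          ENNReal.toReal_mono ENNReal.ofReal_ne_top hupper
      _ = Real.exp (-(lam * y)) := ENNReal.toReal_ofReal (Real.exp_nonneg _)
      _ = (1 - 1/H) ^ y := (hrpow y).symm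
  refine ⟨?_, hupperR⟩
  -- lower bound (inequality (7)); first dispatch the case y = 0
  rcases hy.eq_or_lt with hy0 | hypos
  · -- y = 0 : the event holds a.e.
    have h1 : (1 : ENNReal) ≤ Pr {ω | y ≤ ∑ t ∈ Finset.Icc 1 (Term ω - 1), D t ω} := by
      rw [← (measure_univ (μ := Pr))]
      refine measure_mono_ae (ae_le_set.2 (measure_mono_null ?_ hGnull))
      rintro ω ⟨-, hωnot⟩
      simp only [Set.mem_setOf_eq]
      rintro ⟨h0, hg, hd⟩
      refine hωnot ?_
      show y ≤ ∑ t ∈ Finset.Icc 1 (Term ω - 1), D t ω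
      rw [← hy0]
      exact Finset.sum_nonneg fun t ht => (hg t (Finset.mem_Icc.1 ht).1).1
    have hP1 : (Pr {ω | y ≤ ∑ t ∈ Finset.Icc 1 (Term ω - 1), D t ω}).toReal = 1 := by
      have := le_antisymm prob_le_one h1
      rw [this]
      simp
    rw [hP1]
    refine Real.rpow_lt_one ha0.le ha1 ?_
    rw [← hy0]
    linarith
  -- main case y > 0
  ·
    -- notation for the stopping index τ and stopped sum W
    set τ : Ω → ℕ :=
      fun ω => sInf {T : ℕ | 1 ≤ T ∧ y ≤ ∑ t ∈ Finset.Icc 1 T, D t ω} with hτdef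
    set W : Ω → ℝ := fun ω => ∑ t ∈ Finset.Icc 1 (τ ω), D t ω with hWdef
    -- σ-algebra generated by the D's
    have hSmeas : ∀ T : ℕ,
        Measurable[⨆ t ∈ {t : ℕ | 1 ≤ t}, MeasurableSpace.comap (D t) inferInstance]
          (fun ω => ∑ t ∈ Finset.Icc 1 T, D t ω) := by
      intro T
      apply Finset.measurable_sum
      intro t ht
      have h1 : t ∈ {t : ℕ | 1 ≤ t} := (Finset.mem_Icc.1 ht).1
      exact measurable_iff_comap_le.2
        (le_iSup₂ (f := fun (t : ℕ) (_ : t ∈ {t : ℕ | 1 ≤ t}) =>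
          MeasurableSpace.comap (D t) inferInstance) t h1)
    have hmDle : (⨆ t ∈ {t : ℕ | 1 ≤ t}, MeasurableSpace.comap (D t) inferInstance)
        ≤ ‹MeasurableSpace Ω› := by
      refine iSup₂_le fun t _ => ?_
      exact measurable_iff_comap_le.1 (hDmeas t)
    have hpm : ∀ k : ℕ,
        MeasurableSet[⨆ t ∈ {t : ℕ | 1 ≤ t}, MeasurableSpace.comap (D t) inferInstance]
          {ω | 1 ≤ k ∧ y ≤ ∑ t ∈ Finset.Icc 1 k, D t ω} := by
      intro k
      by_cases hk : 1 ≤ k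
      · simp only [hk, true_and]
        exact measurableSet_le (@measurable_const ℝ Ω _ (⨆ t ∈ {t : ℕ | 1 ≤ t}, MeasurableSpace.comap (D t) inferInstance) y) (hSmeas k)
      · simp only [hk, false_and, Set.setOf_false]
        exact @MeasurableSet.empty _ (⨆ t ∈ {t : ℕ | 1 ≤ t}, MeasurableSpace.comap (D t) inferInstance)
    have hWmeas : ∀ c : ℝ,
        MeasurableSet[⨆ t ∈ {t : ℕ | 1 ≤ t}, MeasurableSpace.comap (D t) inferInstance]
          {ω | W ω ≤ c} := by
      intro c
      exact measurableSet_stopped_le_aux (fun T ω => ∑ t ∈ Finset.Icc 1 T, D t ω)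
        hSmeas (fun k ω => 1 ≤ k ∧ y ≤ ∑ t ∈ Finset.Icc 1 k, D t ω) hpm
        (fun ω h => Nat.not_succ_le_zero 0 h.1) c
    -- pointwise facts about τ on the good set
    have htauPt : ∀ ω, (∀ t, 1 ≤ t → 0 ≤ D t ω ∧ D t ω ≤ Dmax) →
        Tendsto (fun T => ∑ t ∈ Finset.Icc 1 T, D t ω) atTop atTop →
        y ≤ W ω ∧ W ω < y + Dmax ∧ 1 ≤ τ ω := by
      intro ω hg hdω
      have hne : {T : ℕ | 1 ≤ T ∧ y ≤ ∑ t ∈ Finset.Icc 1 T, D t ω}.Nonempty := by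
        obtain ⟨T, h1, h2⟩ := ((hdω.eventually_ge_atTop y).and (eventually_ge_atTop 1)).exists
        exact ⟨T, h2, h1⟩
      have hmem := Nat.sInf_mem hne
      obtain ⟨hτ1, hτy⟩ := hmem
      have hτ1' : 1 ≤ τ ω := hτ1
      refine ⟨hτy, ?_, hτ1'⟩
      have hτsucc : τ ω - 1 + 1 = τ ω := Nat.succ_pred_eq_of_pos hτ1'
      have hsplit : W ω = (∑ t ∈ Finset.Icc 1 (τ ω - 1), D t ω) + D (τ ω - 1 + 1) ω := by
        show (∑ t ∈ Finset.Icc 1 (τ ω), D t ω)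
            = (∑ t ∈ Finset.Icc 1 (τ ω - 1), D t ω) + D (τ ω - 1 + 1) ω
        rw [← hτsucc]
        exact Finset.sum_Icc_succ_top (by omega) _
      have hd1 : D (τ ω - 1 + 1) ω ≤ Dmax := (hg _ (by omega)).2
      have hsum_lt : (∑ t ∈ Finset.Icc 1 (τ ω - 1), D t ω) < y := by
        by_cases h1 : τ ω = 1
        · rw [h1]
          rw [show ((1:ℕ) - 1) = 0 from rfl, Finset.Icc_eq_empty (by omega), Finset.sum_empty]
          exact hypos
        · have hltτ : τ ω - 1 < τ ω := by omega
          have hnot : τ ω - 1 ∉ {T : ℕ | 1 ≤ T ∧ y ≤ ∑ t ∈ Finset.Icc 1 T, D t ω} :=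
            Nat.notMem_of_lt_sInf hltτ
          simp only [Set.mem_setOf_eq, not_and, not_le] at hnot
          exact hnot (by omega)
      rw [hsplit]
      linarith
    have hτae : ∀ᵐ ω ∂Pr, y ≤ W ω ∧ W ω < y + Dmax :=
      (hDgood.and hdiv).mono fun ω hω => ⟨(htauPt ω hω.1 hω.2).1, (htauPt ω hω.1 hω.2).2.1⟩
    obtain ⟨n, hn⟩ : ∃ n : ℕ, Pr {ω | W ω ≤ y + Dmax - 1 / ((n : ℝ) + 1)} ≠ 0 := by
      by_contra hcon
      push_neg at hcon
      have hU : Pr (⋃ n : ℕ, {ω | W ω ≤ y + Dmax - 1 / ((n : ℝ) + 1)}) = 0 :=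
        measure_iUnion_null hcon
      have hmemU : ∀ᵐ ω ∂Pr, ω ∈ ⋃ n : ℕ, {ω | W ω ≤ y + Dmax - 1 / ((n : ℝ) + 1)} := by
        refine hτae.mono fun ω hω => ?_
        obtain ⟨m, hm⟩ := exists_nat_one_div_lt (sub_pos.2 hω.2)
        exact Set.mem_iUnion.2 ⟨m, by simp only [Set.mem_setOf_eq]; linarith⟩
      have h0 := ae_iff.1 hmemU
      have hbig : (1 : ENNReal) ≤ 0 := by
        calc (1 : ENNReal) = Pr Set.univ := measure_univ.symm
          _ ≤ Pr ((⋃ n : ℕ, {ω | W ω ≤ y + Dmax - 1 / ((n : ℝ) + 1)}) ∪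
                {ω | ¬ ω ∈ ⋃ n : ℕ, {ω | W ω ≤ y + Dmax - 1 / ((n : ℝ) + 1)}}) :=
              measure_mono fun ω _ => (em _)
          _ ≤ Pr (⋃ n : ℕ, {ω | W ω ≤ y + Dmax - 1 / ((n : ℝ) + 1)}) +
                Pr {ω | ¬ ω ∈ ⋃ n : ℕ, {ω | W ω ≤ y + Dmax - 1 / ((n : ℝ) + 1)}} :=
              measure_union_le _ _
          _ = 0 := by rw [hU, h0, add_zero]
      simp at hbig
    set c : ℝ := y + Dmax - 1 / ((n : ℝ) + 1) with hcdef
    have hn1 : (0:ℝ) < (n:ℝ) + 1 := by positivity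
    have hnn : (0:ℝ) ≤ (n:ℝ) := Nat.cast_nonneg n
    have hc0 : 0 < c := by
      have h1 : 1 / ((n:ℝ) + 1) ≤ 1 := by rw [div_le_one hn1]; linarith
      rw [hcdef]; linarith
    have hclt : c < y + Dmax := by
      have : 0 < 1 / ((n:ℝ) + 1) := by positivity
      rw [hcdef]; linarith
    have hyD : (0:ℝ) ≤ y + Dmax := by linarith
    have hA1 : Pr (Z ⁻¹' Set.Ici (y + Dmax))
        = ENNReal.ofReal (Real.exp (-(lam * (y + Dmax)))) := hZtail _ hyD
    have hIcoval : Pr (Z ⁻¹' Set.Ico c (y + Dmax))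
        = ENNReal.ofReal (Real.exp (-(lam * c)))
          - ENNReal.ofReal (Real.exp (-(lam * (y + Dmax)))) := by
      have hset : Set.Ico c (y + Dmax) = Set.Ici c \ Set.Ici (y + Dmax) := by
        rw [Set.Ici_diff_Ici]
      rw [hset, Set.preimage_diff,
        measure_diff (Set.preimage_mono (Set.Ici_subset_Ici.2 hclt.le))
          (hZmeas measurableSet_Ici).nullMeasurableSet (measure_ne_top _ _),
        hZtail _ hc0.le, hZtail _ hyD]
    have hIcone : Pr (Z ⁻¹' Set.Ico c (y + Dmax)) ≠ 0 := by
      rw [hIcoval]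
      intro h
      rw [tsub_eq_zero_iff_le,
        ENNReal.ofReal_le_ofReal_iff (Real.exp_nonneg _)] at h
      have hlt2 : -(lam * (y + Dmax)) < -(lam * c) := by nlinarith
      have := Real.exp_lt_exp.2 hlt2
      linarith
    have hA2eq : Pr ({ω | W ω ≤ c} ∩ Z ⁻¹' Set.Ico c (y + Dmax))
        = Pr (Z ⁻¹' Set.Ico c (y + Dmax)) * Pr {ω | W ω ≤ c} := by
      have h := (Indep_iff _ _ Pr).1 hindep
        (Z ⁻¹' Set.Ico c (y + Dmax)) {ω | W ω ≤ c}
        ⟨Set.Ico c (y + Dmax), measurableSet_Ico, rfl⟩ (hWmeas c)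
      rw [← h, Set.inter_comm]
    have hA2ne : Pr ({ω | W ω ≤ c} ∩ Z ⁻¹' Set.Ico c (y + Dmax)) ≠ 0 := by
      rw [hA2eq]; exact mul_ne_zero hIcone hn
    have hdisj : Disjoint (Z ⁻¹' Set.Ici (y + Dmax))
        ({ω | W ω ≤ c} ∩ Z ⁻¹' Set.Ico c (y + Dmax)) := by
      rw [Set.disjoint_left]
      rintro ω h1 ⟨-, h2⟩
      exact absurd h1 (not_le.2 h2.2)
    have hA2meas : MeasurableSet ({ω | W ω ≤ c} ∩ Z ⁻¹' Set.Ico c (y + Dmax)) :=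
      (hmDle _ (hWmeas c)).inter (hZmeas measurableSet_Ico)
    have hle : Pr (Z ⁻¹' Set.Ici (y + Dmax))
          + Pr ({ω | W ω ≤ c} ∩ Z ⁻¹' Set.Ico c (y + Dmax))
        ≤ Pr {ω | y ≤ ∑ t ∈ Finset.Icc 1 (Term ω - 1), D t ω} := by
      rw [← measure_union hdisj hA2meas]
      refine measure_mono_ae (ae_le_set.2 (measure_mono_null ?_ hGnull))
      rintro ω ⟨hωA, hωnot⟩
      simp only [Set.mem_setOf_eq]
      rintro ⟨h0, hg, hd⟩
      refine hωnot ?_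
      show y ≤ ∑ t ∈ Finset.Icc 1 (Term ω - 1), D t ω
      obtain ⟨hτy, hτlt, hτ1⟩ := htauPt ω hg hd
      have hZW : W ω ≤ Z ω := by
        rcases hωA with h | ⟨hWc, hZIco⟩
        · exact le_trans hτlt.le h
        · exact le_trans hWc hZIco.1
      obtain ⟨hT1, hTZ, -⟩ := hTermPt ω h0 hg hd
      have hτT : τ ω < Term ω := by
        by_contra hcon2
        push_neg at hcon2
        have hmle := hmono ω hg (Term ω) (τ ω) hcon2
        exact absurd hTZ (not_lt.2 (le_trans hmle hZW))
      calc y ≤ W ω := hτy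
        _ ≤ ∑ t ∈ Finset.Icc 1 (Term ω - 1), D t ω :=
            hmono ω hg (τ ω) (Term ω - 1) (by omega)
    have hsumR : (Pr (Z ⁻¹' Set.Ici (y + Dmax))).toReal
          + (Pr ({ω | W ω ≤ c} ∩ Z ⁻¹' Set.Ico c (y + Dmax))).toReal
        ≤ (Pr {ω | y ≤ ∑ t ∈ Finset.Icc 1 (Term ω - 1), D t ω}).toReal := by
      rw [← ENNReal.toReal_add (measure_ne_top _ _) (measure_ne_top _ _)]
      exact ENNReal.toReal_mono (measure_ne_top _ _) hle
    have hA2pos : 0 < (Pr ({ω | W ω ≤ c} ∩ Z ⁻¹' Set.Ico c (y + Dmax))).toReal :=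
      ENNReal.toReal_pos hA2ne (measure_ne_top _ _)
    have hA1R : (Pr (Z ⁻¹' Set.Ici (y + Dmax))).toReal
        = Real.exp (-(lam * (y + Dmax))) := by
      rw [hA1, ENNReal.toReal_ofReal (Real.exp_nonneg _)]
    rw [hrpow (y + Dmax)]
    linarith
end

section
/- For all real numbers H > 1 and Dmax ≥ 1: −(1 − 1/H)^Dmax / log(1 − 1/H) ≥ H − Dmax − 1. -/
/-- Inequality (10) in the proof of the Expected Horizon Lemma: integrating the lower
geometric tail gives `-(1 - 1/H) ^ Dmax / log (1 - 1/H)`, which is at least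
`H - Dmax - 1`. -/
theorem lower_geometric_tail_integral_bound (H Dmax : ℝ) (hH : 1 < H) (hDmax : 1 ≤ Dmax) :
    -(1 - 1 / H) ^ Dmax / Real.log (1 - 1 / H) ≥ H - Dmax - 1 := by
  have hH0 : 0 < H := by linarith
  set q : ℝ := 1 - 1 / H with hq
  have hq0 : 0 < q := by
    have : 1 / H < 1 := by
      rw [div_lt_one hH0]; exact hH
    rw [hq]; linarith
  have hq1 : q < 1 := by
    have : 0 < 1 / H := by positivity
    rw [hq]; linarith
  have hlog : Real.log q < 0 := Real.log_neg hq0 hq1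
  have hrw : -q ^ Dmax / Real.log q = q ^ Dmax / (-Real.log q) := by
    ring
  rw [ge_iff_le, hrw]
  rcases le_or_gt (H - Dmax - 1) 0 with h | h
  · have : 0 ≤ q ^ Dmax / (-Real.log q) := by
      apply div_nonneg (Real.rpow_nonneg hq0.le _); linarith
    linarith
  -- main case
  have hBern : 1 - Dmax / H ≤ q ^ Dmax := by
    have := one_add_mul_self_le_rpow_one_add (s := -(1/H)) (by
      have : 1 / H ≤ 1 := by rw [div_le_one hH0]; linarith
      linarith) hDmax
    have h2 : (1 : ℝ) + -(1/H) = q := by rw [hq]; ring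
    rw [h2] at this
    calc 1 - Dmax / H = 1 + Dmax * -(1/H) := by ring
      _ ≤ q ^ Dmax := this
  have hlogle : -Real.log q ≤ 1 / (H - 1) := by
    have hinv : Real.log q⁻¹ ≤ q⁻¹ - 1 := Real.log_le_sub_one_of_pos (by positivity)
    rw [Real.log_inv] at hinv
    have hqval : q⁻¹ - 1 = 1 / (H - 1) := by
      have h1 : H - 1 ≠ 0 := by linarith
      rw [hq]; field_simp; ring
    linarith [hqval ▸ hinv]
  have hpos : 0 < 1 - Dmax / H := by
    have : Dmax / H < 1 := by rw [div_lt_one hH0]; linarith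
    linarith
  have hloggt : 0 < -Real.log q := by linarith
  have hstep : (1 - Dmax / H) / (1 / (H - 1)) ≤ q ^ Dmax / (-Real.log q) :=
    div_le_div₀ (Real.rpow_nonneg hq0.le _) hBern hloggt hlogle
  have hval : (1 - Dmax / H) / (1 / (H - 1)) = (1 - Dmax / H) * (H - 1) := by
    field_simp
  rw [hval] at hstep
  have hfin : H - Dmax - 1 ≤ (1 - Dmax / H) * (H - 1) := by
    have hd : 0 ≤ Dmax / H := by positivity
    have : (1 - Dmax / H) * (H - 1) = H - 1 - Dmax + Dmax / H := by
      field_simp; ring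
    linarith [this ▸ (by linarith : H - Dmax - 1 ≤ H - 1 - Dmax + Dmax / H)]
  linarith
end

section
/- Let S be a finite nonempty type, P : S → S → ℝ a row-stochastic irreducible matrix with stationary distribution μ, D : S → S → ℝ with 0 ≤ D i j ≤ Dmax (Dmax ≥ 1), and assume there exist i₀, j₀ with P i₀ j₀ > 0 and D i₀ j₀ > 0. Then there exist constants C > 0 and H₀ > 1 such that for every real H ≥ H₀ and every stationary distribution μ'_H of the probabilistic-termination matrix P'_H on Option S: max_{i ∈ S} |μ i − μ'_H (some i)| ≤ C / H and μ'_H none ≤ C / H. -/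
open Finset Filter MeasureTheory ProbabilityTheory

/-- A stationary distribution of a matrix `Q`. -/
def IsStationaryDistrib {T : Type*} [Fintype T] (Q : T → T → ℝ) (ν : T → ℝ) : Prop :=
  (∀ i, 0 ≤ ν i) ∧ (∑ i, ν i = 1) ∧ ∀ j, ∑ i, ν i * Q i j = ν j

section AuxiliaryLemmas
variable {S : Type*} [Fintype S] [DecidableEq S]

variable {S : Type*} [Fintype S] [DecidableEq S]

lemma matpow_nonneg {P : S → S → ℝ} (h0 : ∀ i j, 0 ≤ P i j) :
    ∀ n i j, 0 ≤ ((Matrix.of P) ^ n) i j := by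
  intro n
  induction n with
  | zero => intro i j; rw [pow_zero, Matrix.one_apply]; split <;> norm_num
  | succ n ih =>
    intro i j
    rw [pow_succ, Matrix.mul_apply]
    exact Finset.sum_nonneg fun k _ => mul_nonneg (ih i k) (h0 k j)

lemma invariant_pow {P : S → S → ℝ} {y : S → ℝ}
    (hy : ∀ j, ∑ i, y i * P i j = y j) :
    ∀ n j, ∑ i, y i * ((Matrix.of P) ^ n) i j = y j := by
  intro n
  induction n with
  | zero => intro j; simp [Matrix.one_apply, mul_ite]
  | succ n ih =>
    intro j
    calc ∑ i, y i * ((Matrix.of P) ^ (n+1)) i j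
        = ∑ i, ∑ k, y i * (((Matrix.of P) ^ n) i k * P k j) := by
          refine Finset.sum_congr rfl fun i _ => ?_
          rw [pow_succ, Matrix.mul_apply, Finset.mul_sum]
          rfl
      _ = ∑ k, (∑ i, y i * ((Matrix.of P) ^ n) i k) * P k j := by
          rw [Finset.sum_comm]
          exact Finset.sum_congr rfl fun k _ => by rw [Finset.sum_mul]; exact Finset.sum_congr rfl fun i _ => (mul_assoc _ _ _).symm
      _ = ∑ k, y k * P k j := by
          exact Finset.sum_congr rfl fun k _ => by rw [ih k]
      _ = y j := hy j

lemma invariant_pos {P : S → S → ℝ} (hP : RowStochastic P) (hirr : MatIrreducible P)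
    {y : S → ℝ} (hy0 : ∀ i, 0 ≤ y i) (hy : ∀ j, ∑ i, y i * P i j = y j)
    {i : S} (hi : 0 < y i) : ∀ j, 0 < y j := by
  intro j
  obtain ⟨n, -, hn⟩ := hirr i j
  have h := invariant_pow hy n j
  have hle : y i * ((Matrix.of P) ^ n) i j ≤ ∑ k, y k * ((Matrix.of P) ^ n) k j :=
    Finset.single_le_sum (fun k _ => mul_nonneg (hy0 k) (matpow_nonneg hP.1 n k j))
      (Finset.mem_univ i)
  calc (0:ℝ) < y i * ((Matrix.of P) ^ n) i j := mul_pos hi hn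
    _ ≤ ∑ k, y k * ((Matrix.of P) ^ n) k j := hle
    _ = y j := h

lemma invariant_sum_zero_eq_zero {P : S → S → ℝ} (hP : RowStochastic P)
    (hirr : MatIrreducible P) {x : S → ℝ} (hx : ∀ j, ∑ i, x i * P i j = x j)
    (hsum : ∑ i, x i = 0) : x = 0 := by
  by_contra hne
  have hxne : ∃ a, x a ≠ 0 := by
    by_contra h
    push_neg at h
    exact hne (funext fun a => h a)
  have habs_le : ∀ j, |x j| ≤ ∑ i, |x i| * P i j := by
    intro j
    calc |x j| = |∑ i, x i * P i j| := by rw [hx j]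
      _ ≤ ∑ i, |x i * P i j| := Finset.abs_sum_le_sum_abs _ _
      _ = ∑ i, |x i| * P i j := by
          refine Finset.sum_congr rfl fun i _ => ?_
          rw [abs_mul, abs_of_nonneg (hP.1 i j)]
  have hsum_eq : ∑ j, (∑ i, |x i| * P i j) = ∑ j, |x j| := by
    rw [Finset.sum_comm]
    refine Finset.sum_congr rfl fun i _ => ?_
    rw [← Finset.mul_sum, hP.2 i, mul_one]
  have habs : ∀ j, ∑ i, |x i| * P i j = |x j| := by
    intro j
    by_contra hne'
    have hlt : |x j| < ∑ i, |x i| * P i j := lt_of_le_of_ne (habs_le j) fun h => hne' h.symm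
    have : ∑ k, |x k| < ∑ k, ∑ i, |x i| * P i k :=
      Finset.sum_lt_sum (fun k _ => habs_le k) ⟨j, Finset.mem_univ j, hlt⟩
    linarith [hsum_eq]
  set p : S → ℝ := fun j => (|x j| + x j) / 2 with hp
  set q : S → ℝ := fun j => (|x j| - x j) / 2 with hq
  have hp0 : ∀ j, 0 ≤ p j := fun j => by
    have := neg_abs_le (x j); simp only [hp]; linarith
  have hq0 : ∀ j, 0 ≤ q j := fun j => by
    have := le_abs_self (x j); simp only [hq]; linarith
  have hpinv : ∀ j, ∑ i, p i * P i j = p j := by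
    intro j
    calc ∑ i, p i * P i j = ((∑ i, |x i| * P i j) + ∑ i, x i * P i j) / 2 := by
          rw [← Finset.sum_add_distrib, Finset.sum_div]
          exact Finset.sum_congr rfl fun i _ => by simp only [hp]; ring
      _ = p j := by rw [habs j, hx j]
  have hqinv : ∀ j, ∑ i, q i * P i j = q j := by
    intro j
    calc ∑ i, q i * P i j = ((∑ i, |x i| * P i j) - ∑ i, x i * P i j) / 2 := by
          rw [← Finset.sum_sub_distrib, Finset.sum_div]
          exact Finset.sum_congr rfl fun i _ => by simp only [hq]; ring
      _ = q j := by rw [habs j, hx j]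
  have hposb : ∃ b, 0 < x b := by
    by_contra h
    push_neg at h
    obtain ⟨a, ha⟩ := hxne
    have : ∀ i ∈ Finset.univ, x i = 0 :=
      (Finset.sum_eq_zero_iff_of_nonpos (fun i _ => h i)).mp hsum
    exact ha (this a (Finset.mem_univ a))
  have hnegc : ∃ c, x c < 0 := by
    by_contra h
    push_neg at h
    obtain ⟨a, ha⟩ := hxne
    have : ∀ i ∈ Finset.univ, x i = 0 :=
      (Finset.sum_eq_zero_iff_of_nonneg (fun i _ => h i)).mp hsum
    exact ha (this a (Finset.mem_univ a))
  obtain ⟨b, hb⟩ := hposb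
  obtain ⟨c, hc⟩ := hnegc
  have hpb : 0 < p b := by
    have := le_abs_self (x b); simp only [hp]; linarith
  have hqc : 0 < q c := by
    have := neg_abs_le (x c); simp only [hq]; linarith
  have hpall := invariant_pos hP hirr hp0 hpinv hpb
  have hqall := invariant_pos hP hirr hq0 hqinv hqc
  have hzero : p b * q b = 0 := by
    have : p b * q b = (|x b| ^ 2 - x b ^ 2) / 4 := by simp only [hp, hq]; ring
    rw [this, sq_abs, sub_self, zero_div]
  exact absurd hzero (ne_of_gt (mul_pos (hpall b) (hqall b)))

end AuxiliaryLemmas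

lemma exists_stability_const {S : Type*} [Fintype S] [Nonempty S] [DecidableEq S]
    (P : S → S → ℝ) (hP : RowStochastic P) (hirr : MatIrreducible P) :
    ∃ K : ℝ, 0 ≤ K ∧ ∀ x : S → ℝ, (∑ i, x i) = 0 →
      ‖x‖ ≤ K * ‖(fun j => x j - ∑ i, x i * P i j : S → ℝ)‖ := by
  classical
  let sLin : (S → ℝ) →ₗ[ℝ] ℝ :=
    { toFun := fun x => ∑ i, x i
      map_add' := fun a b => by simp [Finset.sum_add_distrib]
      map_smul' := fun c a => by simp [Finset.mul_sum] }
  let L : (S → ℝ) →ₗ[ℝ] (S → ℝ) :=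
    { toFun := fun x j => x j - ∑ i, x i * P i j
      map_add' := fun a b => by
        funext j
        simp only [Pi.add_apply]
        rw [show (∑ i, (a i + b i) * P i j) = (∑ i, a i * P i j) + ∑ i, b i * P i j by
          rw [← Finset.sum_add_distrib]; exact Finset.sum_congr rfl fun i _ => add_mul _ _ _]
        ring
      map_smul' := fun c a => by
        funext j
        simp only [Pi.smul_apply, smul_eq_mul, RingHom.id_apply]
        rw [show (∑ i, c * a i * P i j) = c * ∑ i, a i * P i j by
          rw [Finset.mul_sum]; exact Finset.sum_congr rfl fun i _ => mul_assoc _ _ _]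
        ring }
  set V : Submodule ℝ (S → ℝ) := LinearMap.ker sLin with hV
  have hres : ∀ x ∈ V, L x ∈ V := by
    intro x _
    have : sLin (L x) = 0 := by
      show (∑ j, (x j - ∑ i, x i * P i j)) = 0
      rw [Finset.sum_sub_distrib, Finset.sum_comm]
      have : ∀ i ∈ Finset.univ, (∑ j, x i * P i j) = x i := fun i _ => by
        rw [← Finset.mul_sum, hP.2 i, mul_one]
      rw [Finset.sum_congr rfl this, sub_self]
    exact LinearMap.mem_ker.mpr this
  let e : V →ₗ[ℝ] V := L.restrict hres
  have hinj : Function.Injective e := by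
    intro v w hvw
    have hc : L (v : S → ℝ) = L (w : S → ℝ) := by
      have := congrArg (Subtype.val) hvw
      simpa [e, LinearMap.restrict_apply] using this
    have hz : L ((v : S → ℝ) - (w : S → ℝ)) = 0 := by rw [map_sub, hc, sub_self]
    set z : S → ℝ := (v : S → ℝ) - (w : S → ℝ) with hzdef
    have hzsum : ∑ i, z i = 0 := by
      have hv := LinearMap.mem_ker.mp v.2
      have hw := LinearMap.mem_ker.mp w.2
      have : sLin z = 0 := by rw [map_sub, hv, hw, sub_self]
      exact this
    have hzinv : ∀ j, ∑ i, z i * P i j = z j := by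
      intro j
      have := congrFun hz j
      have h2 : z j - ∑ i, z i * P i j = 0 := this
      linarith
    have : z = 0 := invariant_sum_zero_eq_zero hP hirr hzinv hzsum
    exact Subtype.ext (by rw [← sub_eq_zero]; exact this)
  have hsurj : Function.Surjective e := LinearMap.injective_iff_surjective.mp hinj
  let eq : V ≃ₗ[ℝ] V := LinearEquiv.ofBijective e ⟨hinj, hsurj⟩
  let g : V →L[ℝ] V := LinearMap.toContinuousLinearMap (eq.symm : V ≃ₗ[ℝ] V).toLinearMap
  refine ⟨‖g‖, norm_nonneg g, ?_⟩
  intro x hx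
  have hxV : x ∈ V := LinearMap.mem_ker.mpr (by exact hx)
  set v : V := ⟨x, hxV⟩ with hv
  have key : ‖v‖ ≤ ‖g‖ * ‖eq v‖ := by
    have : v = g (eq v) := by
      show v = eq.symm (eq v)
      rw [LinearEquiv.symm_apply_apply]
    calc ‖v‖ = ‖g (eq v)‖ := by rw [← this]
      _ ≤ ‖g‖ * ‖eq v‖ := g.le_opNorm _
  have h1 : ‖v‖ = ‖x‖ := rfl
  have h2 : ‖eq v‖ = ‖(fun j => x j - ∑ i, x i * P i j : S → ℝ)‖ := by
    have : ((eq v : V) : S → ℝ) = L x := by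
      show ((e v : V) : S → ℝ) = L x
      rw [LinearMap.restrict_apply]
    rw [show ‖eq v‖ = ‖((eq v : V) : S → ℝ)‖ from rfl, this]
    rfl
  rw [← h1, ← h2]
  exact key


/-- Stationary distribution perturbation lemma: the stationary distributions of the
original chain and of the PT chain agree up to `O(1/H)` in the sup norm, and the
stationary mass of the terminal state is `O(1/H)`. -/
theorem stationary_distribution_perturbation {S : Type*} [Fintype S] [Nonempty S]
    [DecidableEq S] (P D : S → S → ℝ) (μ : S → ℝ) (Dmax : ℝ) (s₀ : S)
    (hP : RowStochastic P) (hirr : MatIrreducible P) (hμ : IsStationaryDistrib P μ)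
    (hD0 : ∀ i j, 0 ≤ D i j) (hD1 : ∀ i j, D i j ≤ Dmax) (hDmax : 1 ≤ Dmax)
    (hpos : ∃ i₀ j₀, 0 < P i₀ j₀ ∧ 0 < D i₀ j₀) :
    ∃ C > 0, ∃ H₀ > 1, ∀ H, H₀ ≤ H → ∀ μ' : Option S → ℝ,
      IsStationaryDistrib (PTMatrix P D H s₀) μ' →
      (∀ i, |μ i - μ' (some i)| ≤ C / H) ∧ μ' none ≤ C / H := by
  classical
  obtain ⟨K, hK0, hKb⟩ := exists_stability_const P hP hirr
  obtain ⟨hμ0, hμ1, hμst⟩ := hμ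
  refine ⟨(2 * K + 1) * Dmax, by nlinarith, 2, by norm_num, ?_⟩
  intro H hH μ' hst
  obtain ⟨hν0, hνsum, hνst⟩ := hst
  have hH0 : (0:ℝ) < H := by linarith
  have hHnn : (0:ℝ) ≤ 1 / H := by positivity
  have hH1 : 1 / H < 1 := by rw [div_lt_one hH0]; linarith
  set a : ℝ := 1 - 1 / H with ha
  have ha0 : 0 < a := by simp only [ha]; linarith
  have ha1 : a ≤ 1 := by simp only [ha]; linarith
  set c : ℝ := Dmax / H with hc
  have hc0 : 0 ≤ c := by
    have : (0:ℝ) ≤ Dmax := by linarith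
    positivity
  -- pointwise bounds on the termination factors
  have hkey : ∀ i j : S, 0 ≤ 1 - a ^ (D i j) ∧ 1 - a ^ (D i j) ≤ c := by
    intro i j
    have hle1 : a ^ (D i j) ≤ 1 := Real.rpow_le_one ha0.le ha1 (hD0 i j)
    have hbern : 1 - Dmax / H ≤ a ^ Dmax := by
      have hs : (-1:ℝ) ≤ -(1 / H) := by linarith
      have := one_add_mul_self_le_rpow_one_add hs hDmax
      have heq : (1:ℝ) + -(1 / H) = a := by simp only [ha]; ring
      rw [heq] at this
      calc 1 - Dmax / H = 1 + Dmax * -(1 / H) := by ring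
        _ ≤ a ^ Dmax := this
    have hmono : a ^ Dmax ≤ a ^ (D i j) :=
      Real.rpow_le_rpow_of_exponent_ge ha0 ha1 (hD1 i j)
    exact ⟨by linarith, by simp only [hc]; linarith⟩
  have hPle1 : ∀ i j, P i j ≤ 1 := by
    intro i j
    have := Finset.single_le_sum (f := fun k => P i k) (fun k _ => hP.1 i k) (Finset.mem_univ j)
    rw [hP.2 i] at this
    exact this
  set ν : S → ℝ := fun i => μ' (some i) with hνdef
  set ε : ℝ := μ' none with hεdef
  have hsplit : ∀ f : Option S → ℝ, ∑ x : Option S, f x = f none + ∑ i, f (some i) := by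
    intro f; rw [univ_option, Finset.sum_insertNone]
  have hν0' : ∀ i, 0 ≤ ν i := fun i => hν0 (some i)
  have hε0 : 0 ≤ ε := hν0 none
  have hsum1 : ε + ∑ i, ν i = 1 := by rw [← hsplit μ']; exact hνsum
  have hνle1 : ∑ i, ν i ≤ 1 := by linarith
  -- the `none` stationarity equation
  have hnone : ∑ i, ν i * (∑ j, (1 - a ^ (D i j)) * P i j) = ε := by
    have h := hνst none
    rw [hsplit] at h
    have h0 : μ' none * PTMatrix P D H s₀ none none = 0 := by
      show μ' none * 0 = 0; ring
    rw [h0, zero_add] at h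
    exact h
  have htbound : ∀ i, (∑ j, (1 - a ^ (D i j)) * P i j) ≤ c := by
    intro i
    calc ∑ j, (1 - a ^ (D i j)) * P i j ≤ ∑ j, c * P i j :=
          Finset.sum_le_sum fun j _ =>
            mul_le_mul_of_nonneg_right (hkey i j).2 (hP.1 i j)
      _ = c * ∑ j, P i j := by rw [Finset.mul_sum]
      _ = c := by rw [hP.2 i, mul_one]
  have htnn : ∀ i, 0 ≤ ∑ j, (1 - a ^ (D i j)) * P i j := fun i =>
    Finset.sum_nonneg fun j _ => mul_nonneg (hkey i j).1 (hP.1 i j)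
  have hεle : ε ≤ c := by
    rw [← hnone]
    calc ∑ i, ν i * (∑ j, (1 - a ^ (D i j)) * P i j) ≤ ∑ i, ν i * c :=
          Finset.sum_le_sum fun i _ => mul_le_mul_of_nonneg_left (htbound i) (hν0' i)
      _ = (∑ i, ν i) * c := by rw [Finset.sum_mul]
      _ ≤ 1 * c := mul_le_mul_of_nonneg_right hνle1 hc0
      _ = c := one_mul c
  -- the `some j` stationarity equations
  have hsome : ∀ j, ε * (if j = s₀ then 1 else 0) + ∑ i, ν i * (a ^ (D i j) * P i j) = ν j := by
    intro j
    have h := hνst (some j)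
    rw [hsplit] at h
    exact h
  set err : S → ℝ := fun j => ν j - ∑ i, ν i * P i j with herrdef
  have herr : ∀ j, |err j| ≤ c := by
    intro j
    have h1 : err j = ε * (if j = s₀ then 1 else 0)
        - ∑ i, ν i * ((1 - a ^ (D i j)) * P i j) := by
      simp only [herrdef]
      rw [← hsome j]
      rw [show (∑ i, ν i * ((1 - a ^ (D i j)) * P i j))
          = (∑ i, ν i * P i j) - ∑ i, ν i * (a ^ (D i j) * P i j) by
        rw [← Finset.sum_sub_distrib]; exact Finset.sum_congr rfl fun i _ => by ring]
      ring
    have hB0 : 0 ≤ ∑ i, ν i * ((1 - a ^ (D i j)) * P i j) :=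
      Finset.sum_nonneg fun i _ =>
        mul_nonneg (hν0' i) (mul_nonneg (hkey i j).1 (hP.1 i j))
    have hBle : ∑ i, ν i * ((1 - a ^ (D i j)) * P i j) ≤ c := by
      calc ∑ i, ν i * ((1 - a ^ (D i j)) * P i j) ≤ ∑ i, ν i * c := by
            refine Finset.sum_le_sum fun i _ => mul_le_mul_of_nonneg_left ?_ (hν0' i)
            calc (1 - a ^ (D i j)) * P i j ≤ c * 1 :=
                  mul_le_mul (hkey i j).2 (hPle1 i j) (hP.1 i j) hc0
              _ = c := mul_one c
        _ = (∑ i, ν i) * c := by rw [Finset.sum_mul]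
        _ ≤ 1 * c := mul_le_mul_of_nonneg_right hνle1 hc0
        _ = c := one_mul c
    have hA0 : 0 ≤ ε * (if j = s₀ then 1 else 0) := by
      apply mul_nonneg hε0; split <;> norm_num
    have hAle : ε * (if j = s₀ then 1 else 0) ≤ c := by
      have : ε * (if j = s₀ then 1 else 0) ≤ ε * 1 := by
        apply mul_le_mul_of_nonneg_left _ hε0; split <;> norm_num
      linarith
    rw [h1]
    rw [abs_le]
    constructor <;> linarith
  -- the comparison vector
  set w : S → ℝ := fun j => ν j - (1 - ε) * μ j with hwdef
  have hwsum : ∑ j, w j = 0 := by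
    simp only [hwdef]
    rw [Finset.sum_sub_distrib, ← Finset.mul_sum, hμ1]
    linarith
  have hLw : ∀ j, w j - ∑ i, w i * P i j = err j := by
    intro j
    have hsw : ∑ i, w i * P i j = (∑ i, ν i * P i j) - (1 - ε) * ∑ i, μ i * P i j := by
      rw [Finset.mul_sum, ← Finset.sum_sub_distrib]
      exact Finset.sum_congr rfl fun i _ => by simp only [hwdef]; ring
    rw [hsw, hμst j]
    simp only [hwdef, herrdef]
    ring
  have hwnorm : ‖w‖ ≤ K * c := by
    have h := hKb w hwsum
    have hn : ‖(fun j => w j - ∑ i, w i * P i j : S → ℝ)‖ ≤ c := by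
      rw [pi_norm_le_iff_of_nonneg hc0]
      intro j
      rw [Real.norm_eq_abs]
      calc |w j - ∑ i, w i * P i j| = |err j| := by rw [hLw j]
        _ ≤ c := herr j
    calc ‖w‖ ≤ K * ‖(fun j => w j - ∑ i, w i * P i j : S → ℝ)‖ := h
      _ ≤ K * c := mul_le_mul_of_nonneg_left hn hK0
  have hKc0 : 0 ≤ K * c := mul_nonneg hK0 hc0
  have hCc : (2 * K + 1) * Dmax / H = (2 * K + 1) * c := by
    simp only [hc]; ring
  constructor
  · intro i
    have hwj : |w i| ≤ K * c := by
      have := norm_le_pi_norm w i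
      rw [Real.norm_eq_abs] at this
      linarith
    have hμle1 : μ i ≤ 1 := by
      have := Finset.single_le_sum (f := μ) (fun k _ => hμ0 k) (Finset.mem_univ i)
      rw [hμ1] at this
      exact this
    have hdiff : μ i - μ' (some i) = ε * μ i - w i := by
      simp only [hwdef, hνdef]
      ring
    have hεμ : |ε * μ i| ≤ c := by
      rw [abs_of_nonneg (mul_nonneg hε0 (hμ0 i))]
      calc ε * μ i ≤ ε * 1 := mul_le_mul_of_nonneg_left hμle1 hε0
        _ = ε := mul_one ε
        _ ≤ c := hεle
    rw [hdiff, hCc]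
    calc |ε * μ i - w i| ≤ |ε * μ i| + |w i| := abs_sub _ _
      _ ≤ c + K * c := by linarith
      _ ≤ (2 * K + 1) * c := by nlinarith
  · rw [hCc]
    calc μ' none = ε := rfl
      _ ≤ c := hεle
      _ ≤ (2 * K + 1) * c := by nlinarith
end

section
/- Let S be a finite type, P : S → S → ℝ a row-stochastic matrix, R : S → S → ℝ with |R i j| ≤ Rmax, D : S → S → ℝ with 0 ≤ D i j ≤ Dmax for a real Dmax ≥ 1, and H > 1 a real number. Define R̂ i = Σ_j R i j · P i j and R̂'_H i = Σ_j R i j · (1 − 1/H)^(D i j) · P i j. Then for every i ∈ S: |R̂ i − R̂'_H i| ≤ Rmax · Dmax / H. -/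
open Finset Filter MeasureTheory ProbabilityTheory

/-- A stationary distribution of a matrix `Q`. -/
def MatIsStationary {T : Type*} [Fintype T] (Q : T → T → ℝ) (ν : T → ℝ) : Prop :=
  (∀ i, 0 ≤ ν i) ∧ (∑ i, ν i = 1) ∧ ∀ j, ∑ i, ν i * Q i j = ν j

/-- Lemma 13 (explicit constants): the expected one-step rewards of the original and PT
chains agree up to `Rmax * Dmax / H` in each state. -/
theorem expected_one_step_reward_perturbation {S : Type*} [Fintype S]
    (P R D : S → S → ℝ) (Rmax Dmax H : ℝ)
    (hP : RowStochastic P) (hR : ∀ i j, |R i j| ≤ Rmax)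
    (hD0 : ∀ i j, 0 ≤ D i j) (hD1 : ∀ i j, D i j ≤ Dmax)
    (hDmax : 1 ≤ Dmax) (hH : 1 < H) :
    ∀ i, |Rhat P R i - RhatPT P R D H i| ≤ Rmax * Dmax / H := by
  intro i
  have hH0 : 0 < H := by linarith
  have hq0 : (0:ℝ) ≤ 1 - 1 / H := by
    have : 1 / H ≤ 1 := by rw [div_le_one hH0]; linarith
    linarith
  have hq1 : 1 - 1 / H ≤ 1 := by
    have : 0 ≤ 1 / H := by positivity
    linarith
  have hRmax : 0 ≤ Rmax := (abs_nonneg _).trans (hR i i)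
  have key : ∀ j, 0 ≤ 1 - (1 - 1/H) ^ (D i j) ∧ 1 - (1 - 1/H) ^ (D i j) ≤ Dmax / H := by
    intro j
    constructor
    · have := Real.rpow_le_one hq0 hq1 (hD0 i j)
      linarith
    · have h1 : (1 - 1/H) ^ Dmax ≤ (1 - 1/H) ^ (D i j) :=
        Real.rpow_le_rpow_of_exponent_ge (by have := (div_lt_one hH0).mpr hH; linarith)
          hq1 (hD1 i j)
      have h2 : 1 + Dmax * (-(1/H)) ≤ (1 + (-(1/H))) ^ Dmax :=
        one_add_mul_self_le_rpow_one_add (by nlinarith [one_div_pos.mpr hH0, (div_le_one hH0).mpr hH.le]) hDmax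
      have : 1 - Dmax/H ≤ (1 - 1/H) ^ Dmax := by
        rw [show (1:ℝ) + -(1/H) = 1 - 1/H by ring] at h2
        calc 1 - Dmax/H = 1 + Dmax * (-(1/H)) := by ring
        _ ≤ _ := h2
      linarith
  have hsum : Rhat P R i - RhatPT P R D H i
      = ∑ j, R i j * (1 - (1 - 1/H) ^ (D i j)) * P i j := by
    unfold Rhat RhatPT
    rw [← Finset.sum_sub_distrib]
    congr 1; ext j; ring
  rw [hsum]
  calc |∑ j, R i j * (1 - (1 - 1/H) ^ (D i j)) * P i j|
      ≤ ∑ j, |R i j * (1 - (1 - 1/H) ^ (D i j)) * P i j| := Finset.abs_sum_le_sum_abs _ _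
    _ ≤ ∑ j, Rmax * (Dmax / H) * P i j := by
        apply Finset.sum_le_sum
        intro j _
        rw [abs_mul, abs_mul]
        have h1 := hR i j
        have h2 := (key j).1
        have h3 := (key j).2
        have h4 := hP.1 i j
        rw [abs_of_nonneg h2, abs_of_nonneg h4]
        have : 0 ≤ Dmax / H := by positivity
        gcongr
    _ = Rmax * Dmax / H := by
        rw [← Finset.mul_sum, hP.2 i]; ring
end

section
/- Let S be a finite type, P : S → S → ℝ a row-stochastic matrix, D : S → S → ℝ with 0 ≤ D i j ≤ Dmax for a real Dmax ≥ 1, and H > 1 a real number. Define D̂ i = Σ_j D i j · P i j and D̂'_H i = Σ_j D i j · (1 − 1/H)^(D i j) · P i j. Then for every i ∈ S: |D̂ i − D̂'_H i| ≤ Dmax² / H. -/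
open Finset Filter MeasureTheory ProbabilityTheory

/-- Lemma 14 (explicit constants): the expected one-step difficulty contributions of the
original and PT chains agree up to `Dmax ^ 2 / H` in each state. -/
theorem expected_one_step_difficulty_perturbation {S : Type*} [Fintype S]
    (P D : S → S → ℝ) (Dmax H : ℝ)
    (hP : RowStochastic P)
    (hD0 : ∀ i j, 0 ≤ D i j) (hD1 : ∀ i j, D i j ≤ Dmax)
    (hDmax : 1 ≤ Dmax) (hH : 1 < H) :
    ∀ i, |Dhat P D i - DhatPT P D H i| ≤ Dmax ^ 2 / H := by
  intro i
  have hH0 : (0 : ℝ) < H := lt_trans one_pos hH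
  have hb0 : (0:ℝ) < 1 - 1 / H := by
    have : 1 / H < 1 := by
      rw [div_lt_one hH0]; exact hH
    linarith
  have hb1 : (1:ℝ) - 1 / H ≤ 1 := by
    have : 0 ≤ 1 / H := by positivity
    linarith
  -- Bernoulli: 1 - Dmax / H ≤ (1 - 1 / H) ^ Dmax
  have hbern : 1 - Dmax / H ≤ (1 - 1 / H) ^ Dmax := by
    have := one_add_mul_self_le_rpow_one_add (s := -(1 / H))
      (by have : 1 / H ≤ 1 := by rw [div_le_one hH0]; linarith
          linarith) hDmax
    have h1 : 1 + Dmax * -(1 / H) = 1 - Dmax / H := by ring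
    have h2 : (1 : ℝ) + -(1 / H) = 1 - 1 / H := by ring
    rwa [h1, h2] at this
  have key : ∀ j, D i j * P i j - D i j * ((1 - 1 / H) ^ D i j * P i j) ≤ Dmax ^ 2 / H * P i j := by
    intro j
    have hP0 := hP.1 i j
    have h1 : D i j * P i j - D i j * ((1 - 1 / H) ^ D i j * P i j)
        = D i j * (1 - (1 - 1 / H) ^ D i j) * P i j := by ring
    rw [h1]
    have hmono : (1 - 1 / H) ^ Dmax ≤ (1 - 1 / H) ^ D i j :=
      Real.rpow_le_rpow_of_exponent_ge hb0 hb1 (hD1 i j)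
    have hle1 : (1 - 1 / H) ^ D i j ≤ 1 := Real.rpow_le_one hb0.le hb1 (hD0 i j)
    have h2 : D i j * (1 - (1 - 1 / H) ^ D i j) ≤ Dmax * (Dmax / H) := by
      have : D i j * (1 - (1 - 1 / H) ^ D i j) ≤ Dmax * (1 - (1 - 1 / H) ^ Dmax) := by
        apply mul_le_mul (hD1 i j) (by linarith) (by linarith) (by linarith)
      have h3 : 1 - (1 - 1 / H) ^ Dmax ≤ Dmax / H := by linarith
      calc D i j * (1 - (1 - 1 / H) ^ D i j) ≤ Dmax * (1 - (1 - 1 / H) ^ Dmax) := this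
        _ ≤ Dmax * (Dmax / H) := by
            apply mul_le_mul_of_nonneg_left h3 (by linarith)
    calc D i j * (1 - (1 - 1 / H) ^ D i j) * P i j ≤ Dmax * (Dmax / H) * P i j :=
          mul_le_mul_of_nonneg_right h2 hP0
      _ = Dmax ^ 2 / H * P i j := by ring
  have hnonneg : 0 ≤ Dhat P D i - DhatPT P D H i := by
    rw [Dhat, DhatPT, ← Finset.sum_sub_distrib]
    apply Finset.sum_nonneg
    intro j _
    have hle1 : (1 - 1 / H) ^ D i j ≤ 1 := Real.rpow_le_one hb0.le hb1 (hD0 i j)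
    have hP0 := hP.1 i j
    have hD := hD0 i j
    have h4 : (1 - 1 / H) ^ D i j * P i j ≤ P i j := mul_le_of_le_one_left hP0 hle1
    have h5 : D i j * ((1 - 1 / H) ^ D i j * P i j) ≤ D i j * P i j :=
      mul_le_mul_of_nonneg_left h4 hD
    linarith
  rw [abs_of_nonneg hnonneg, Dhat, DhatPT, ← Finset.sum_sub_distrib]
  calc ∑ j, (D i j * P i j - D i j * ((1 - 1 / H) ^ D i j * P i j))
      ≤ ∑ j, Dmax ^ 2 / H * P i j := Finset.sum_le_sum fun j _ => key j
    _ = Dmax ^ 2 / H := by rw [← Finset.mul_sum, hP.2 i, mul_one]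
end

section
/- Let S be a finite nonempty type, P : S → S → ℝ a row-stochastic irreducible matrix with stationary distribution μ, D : S → S → ℝ with 0 ≤ D i j ≤ Dmax (Dmax ≥ 1), and assume Σ_i D̂ i · μ i > ε for some ε > 0 and that there exist i₀, j₀ with P i₀ j₀ > 0 and D i₀ j₀ > 0. Then there exist ε' > 0 and H₀ > 1 such that for every real H ≥ H₀ and every stationary distribution μ'_H of the probabilistic-termination matrix P'_H on Option S: Σ_i D̂'_H i · μ'_H (some i) > ε'. -/
open Finset Filter MeasureTheory ProbabilityTheory

lemma matpow_entry_nonneg {S : Type*} [Fintype S] [DecidableEq S] {P : S → S → ℝ}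
    (hP : ∀ i j, 0 ≤ P i j) (n : ℕ) : ∀ i j, 0 ≤ ((Matrix.of P) ^ n) i j := by
  induction n with
  | zero => intro i j; simp [Matrix.one_apply]; positivity
  | succ n ih =>
    intro i j
    rw [pow_succ, Matrix.mul_apply]
    exact Finset.sum_nonneg fun k _ => mul_nonneg (ih i k) (hP k j)

noncomputable def iterVec {S : Type*} [Fintype S] (Q : S → S → ℝ) (x : S → ℝ) : ℕ → S → ℝ
  | 0 => x
  | m + 1 => fun j => ∑ i, iterVec Q x m i * Q i j

lemma iterVec_nonneg {S : Type*} [Fintype S] {Q : S → S → ℝ} {x : S → ℝ}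
    (hx : ∀ i, 0 ≤ x i) (hQ : ∀ i j, 0 ≤ Q i j) : ∀ m i, 0 ≤ iterVec Q x m i := by
  intro m
  induction m with
  | zero => exact hx
  | succ m ih =>
    intro j
    exact Finset.sum_nonneg fun i _ => mul_nonneg (ih i) (hQ i j)

lemma iterVec_le {S : Type*} [Fintype S] {Q : S → S → ℝ} {x : S → ℝ}
    (hQ : ∀ i j, 0 ≤ Q i j) (hle : ∀ j, ∑ i, x i * Q i j ≤ x j) :
    ∀ m j, iterVec Q x m j ≤ x j := by
  intro m
  induction m with
  | zero => intro j; exact le_rfl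
  | succ m ih =>
    intro j
    calc ∑ i, iterVec Q x m i * Q i j ≤ ∑ i, x i * Q i j :=
          Finset.sum_le_sum fun i _ => mul_le_mul_of_nonneg_right (ih i) (hQ i j)
      _ ≤ x j := hle j

lemma iterVec_key {S : Type*} [Fintype S] [DecidableEq S] {P Q : S → S → ℝ} {x : S → ℝ}
    {γ : ℝ} (hγ : 0 ≤ γ) (hx : ∀ i, 0 ≤ x i) (hQ0 : ∀ i j, 0 ≤ Q i j)
    (hP0 : ∀ i j, 0 ≤ P i j) (hQγ : ∀ i j, γ * P i j ≤ Q i j) :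
    ∀ m (u : S → ℝ), (∀ i, 0 ≤ u i) →
      γ ^ m * ∑ i, x i * (∑ j, ((Matrix.of P) ^ m) i j * u j) ≤ ∑ i, iterVec Q x m i * u i := by
  intro m
  induction m with
  | zero =>
    intro u hu
    simp [Matrix.one_apply, iterVec]
  | succ m ih =>
    intro u hu
    set u' : S → ℝ := fun k => ∑ j, P k j * u j with hu'def
    have hu' : ∀ k, 0 ≤ u' k := fun k => Finset.sum_nonneg fun j _ => mul_nonneg (hP0 k j) (hu j)
    have hrw : ∀ i, (∑ j, ((Matrix.of P) ^ (m+1)) i j * u j) = ∑ k, ((Matrix.of P) ^ m) i k * u' k := by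
      intro i
      simp only [hu'def, pow_succ, Matrix.mul_apply, Finset.sum_mul, Finset.mul_sum,
        Matrix.of_apply]
      rw [Finset.sum_comm]
      refine Finset.sum_congr rfl fun k _ => Finset.sum_congr rfl fun j _ => by ring
    calc γ ^ (m+1) * ∑ i, x i * (∑ j, ((Matrix.of P) ^ (m+1)) i j * u j)
        = γ * (γ ^ m * ∑ i, x i * (∑ k, ((Matrix.of P) ^ m) i k * u' k)) := by
          simp only [hrw]; ring
      _ ≤ γ * ∑ i, iterVec Q x m i * u' i :=
          mul_le_mul_of_nonneg_left (ih u' hu') hγ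
      _ = ∑ i, iterVec Q x m i * (γ * u' i) := by
          rw [Finset.mul_sum]; exact Finset.sum_congr rfl fun i _ => by ring
      _ ≤ ∑ i, iterVec Q x m i * (∑ j, Q i j * u j) := by
          apply Finset.sum_le_sum
          intro i _
          apply mul_le_mul_of_nonneg_left _ (iterVec_nonneg hx hQ0 m i)
          rw [hu'def, Finset.mul_sum]
          apply Finset.sum_le_sum
          intro j _
          calc γ * (P i j * u j) = (γ * P i j) * u j := by ring
            _ ≤ Q i j * u j := mul_le_mul_of_nonneg_right (hQγ i j) (hu j)
      _ = ∑ j, iterVec Q x (m+1) j * u j := by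
          simp only [iterVec, Finset.sum_mul, Finset.mul_sum]
          rw [Finset.sum_comm]
          exact Finset.sum_congr rfl fun i _ => Finset.sum_congr rfl fun j _ => by ring


set_option maxHeartbeats 2000000 in
/-- **Lemma 5.** The average difficulty contribution per step of the PT chain is bounded
below by a positive constant, uniformly for all sufficiently large expected horizons. -/
theorem pt_average_difficulty_lower_bound {S : Type*} [Fintype S] [Nonempty S]
    [DecidableEq S] (P D : S → S → ℝ) (μ : S → ℝ) (Dmax ε : ℝ) (s₀ : S)
    (hP : RowStochastic P) (hirr : MatIrreducible P) (hμ : IsStationaryDist P μ)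
    (hD0 : ∀ i j, 0 ≤ D i j) (hD1 : ∀ i j, D i j ≤ Dmax) (hDmax : 1 ≤ Dmax)
    (hε : 0 < ε) (hεlt : ε < ∑ i, Dhat P D i * μ i)
    (hpos : ∃ i₀ j₀, 0 < P i₀ j₀ ∧ 0 < D i₀ j₀) :
    ∃ ε' > 0, ∃ H₀ > 1, ∀ H, H₀ ≤ H → ∀ μ' : Option S → ℝ,
      IsStationaryDist (PTMatrix P D H s₀) μ' →
      ε' < ∑ i, DhatPT P D H i * μ' (some i) := by
  classical
  obtain ⟨hPnn, hProw⟩ := hP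
  obtain ⟨i₀, j₀, hPij, hDij⟩ := hpos
  set M : Matrix S S ℝ := Matrix.of P with hM
  have hDhat_nn : ∀ i, 0 ≤ Dhat P D i := fun i =>
    Finset.sum_nonneg fun j _ => mul_nonneg (hD0 i j) (hPnn i j)
  have hDhat₀ : 0 < Dhat P D i₀ := by
    have h1 : D i₀ j₀ * P i₀ j₀ ≤ Dhat P D i₀ :=
      Finset.single_le_sum (fun j _ => mul_nonneg (hD0 i₀ j) (hPnn i₀ j)) (mem_univ j₀)
    nlinarith
  choose n hn1 hnpos using fun i => hirr i i₀
  set N : ℕ := Finset.univ.sup n with hNdef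
  have hnN : ∀ i, n i ≤ N := fun i => Finset.le_sup (mem_univ i)
  have hN1 : 1 ≤ N := le_trans (hn1 (Classical.arbitrary S)) (hnN _)
  have hNpos : (0:ℝ) < N := by exact_mod_cast Nat.lt_of_lt_of_le Nat.zero_lt_one hN1
  set c : ℝ := Finset.univ.inf' Finset.univ_nonempty (fun i => (M ^ (n i)) i i₀) with hcdef
  have hc : 0 < c := (Finset.lt_inf'_iff _).mpr fun i _ => hnpos i
  set p : ℝ := c * Dhat P D i₀ with hpdef
  have hp : 0 < p := mul_pos hc hDhat₀
  have hDmax0 : (0:ℝ) ≤ Dmax := le_trans zero_le_one hDmax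
  set Mexp : ℝ := Dmax * ((N : ℝ) + 2) with hMexp
  have hMexp0 : 0 < Mexp := by positivity
  set β : ℝ := (2⁻¹ : ℝ) ^ (1 / Mexp) with hβdef
  have hβ0 : 0 ≤ β := Real.rpow_nonneg (by norm_num) _
  have hβ1 : β < 1 := Real.rpow_lt_one (by norm_num) (by norm_num) (by positivity)
  refine ⟨p / (3 * N), by positivity, max 2 (1 / (1 - β)),
    lt_of_lt_of_le one_lt_two (le_max_left _ _), ?_⟩
  intro H hH μ' hμ'
  have hH2 : (2:ℝ) ≤ H := le_trans (le_max_left _ _) hH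
  have hHpos : (0:ℝ) < H := by linarith
  have hHβ : 1 / (1 - β) ≤ H := le_trans (le_max_right _ _) hH
  set b : ℝ := 1 - 1 / H with hbdef
  have hinv : 1 / H ≤ 1 - β := by
    rw [div_le_iff₀ hHpos]
    calc (1:ℝ) = (1 - β) * (1/(1-β)) := by
          rw [mul_one_div]; exact (div_self (by linarith)).symm
      _ ≤ (1 - β) * H := mul_le_mul_of_nonneg_left hHβ (by linarith)
  have hbhalf : (2:ℝ)⁻¹ ≤ b := by
    have : 1 / H ≤ 2⁻¹ := by rw [div_le_iff₀ hHpos]; linarith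
    rw [hbdef]; linarith
  have hb0 : 0 < b := lt_of_lt_of_le (by norm_num) hbhalf
  have hb1 : b ≤ 1 := by
    have : 0 < 1/H := by positivity
    rw [hbdef]; linarith
  have hbβ : β ≤ b := by rw [hbdef]; linarith
  set γ : ℝ := b ^ Dmax with hγdef
  have hγ0 : 0 < γ := Real.rpow_pos_of_pos hb0 _
  have hγ1 : γ ≤ 1 := Real.rpow_le_one hb0.le hb1 hDmax0
  have hγle : ∀ i j, γ ≤ b ^ (D i j) := fun i j =>
    Real.rpow_le_rpow_of_exponent_ge hb0 hb1 (hD1 i j)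
  have hγN2 : (2:ℝ)⁻¹ ≤ γ ^ (N + 2) := by
    have h1 : γ ^ (N+2) = b ^ Mexp := by
      rw [hγdef, hMexp, show ((N:ℝ)+2) = ((N+2 : ℕ) : ℝ) by push_cast; ring,
        Real.rpow_mul hb0.le, Real.rpow_natCast]
    have h2 : β ^ Mexp ≤ b ^ Mexp := Real.rpow_le_rpow hβ0 hbβ hMexp0.le
    have h3 : β ^ Mexp = 2⁻¹ := by
      rw [hβdef, ← Real.rpow_mul (by norm_num), one_div_mul_cancel hMexp0.ne', Real.rpow_one]
    rw [h1]; linarith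
  set Q : S → S → ℝ := fun i j => b ^ (D i j) * P i j with hQdef
  have hQ0 : ∀ i j, 0 ≤ Q i j := fun i j =>
    mul_nonneg (Real.rpow_nonneg hb0.le _) (hPnn i j)
  have hQγ : ∀ i j, γ * P i j ≤ Q i j := fun i j =>
    mul_le_mul_of_nonneg_right (hγle i j) (hPnn i j)
  obtain ⟨hμ'nn, hμ'sum, hμ'stat⟩ := hμ'
  set x : S → ℝ := fun i => μ' (some i) with hxdef
  set α : ℝ := μ' none with hαdef
  have hx0 : ∀ i, 0 ≤ x i := fun i => hμ'nn (some i)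
  have hα0 : 0 ≤ α := hμ'nn none
  have hxsum : α + ∑ i, x i = 1 := by
    rw [← hμ'sum, Fintype.sum_option]
  have hstat : ∀ j, α * (if j = s₀ then 1 else 0) + ∑ i, x i * Q i j = x j := by
    intro j
    have h := hμ'stat (some j)
    rw [Fintype.sum_option] at h
    simpa [PTMatrix, hQdef, hbdef] using h
  have hxQ_le : ∀ j, ∑ i, x i * Q i j ≤ x j := by
    intro j
    have h := hstat j
    have h0 : 0 ≤ α * (if j = s₀ then 1 else 0) := by
      split <;> simp [hα0]
    linarith
  have hαnone : α = ∑ i, x i * (∑ j, (1 - b ^ (D i j)) * P i j) := by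
    have h := hμ'stat none
    rw [Fintype.sum_option] at h
    simpa [PTMatrix, hbdef] using h.symm
  have hγ1α : γ ≤ 1 - α := by
    have hb1' : ∀ i, ∑ j, (1 - b ^ (D i j)) * P i j ≤ 1 - γ := by
      intro i
      calc ∑ j, (1 - b ^ (D i j)) * P i j ≤ ∑ j, (1 - γ) * P i j :=
            Finset.sum_le_sum fun j _ =>
              mul_le_mul_of_nonneg_right (by linarith [hγle i j]) (hPnn i j)
        _ = 1 - γ := by rw [← Finset.mul_sum, hProw i, mul_one]
    have hαle : α ≤ (1 - γ) * ∑ i, x i := by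
      rw [hαnone, Finset.mul_sum]
      exact Finset.sum_le_sum fun i _ => by
        rw [mul_comm (1 - γ) (x i)]
        exact mul_le_mul_of_nonneg_left (hb1' i) (hx0 i)
    have hxsum_le : ∑ i, x i ≤ 1 := by linarith
    have hxsum_nn : 0 ≤ ∑ i, x i := Finset.sum_nonneg fun i _ => hx0 i
    nlinarith
  set δ : ℝ := ∑ i, x i * Dhat P D i with hδdef
  have hδ0 : 0 ≤ δ := Finset.sum_nonneg fun i _ => mul_nonneg (hx0 i) (hDhat_nn i)
  set h : ℕ → S → ℝ := fun m i => ∑ j, (M ^ m) i j * Dhat P D j with hhdef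
  have hh0 : ∀ m i, 0 ≤ h m i := fun m i =>
    Finset.sum_nonneg fun j _ => mul_nonneg (matpow_entry_nonneg hPnn m i j) (hDhat_nn j)
  have key1 : ∀ m, γ ^ m * ∑ i, x i * h m i ≤ ∑ i, iterVec Q x m i * Dhat P D i :=
    fun m => iterVec_key hγ0.le hx0 hQ0 hPnn hQγ m _ hDhat_nn
  have key2 : ∀ m, ∑ i, iterVec Q x m i * Dhat P D i ≤ δ := fun m =>
    Finset.sum_le_sum fun i _ =>
      mul_le_mul_of_nonneg_right (iterVec_le hQ0 hxQ_le m i) (hDhat_nn i)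
  have hxh0 : ∀ m, 0 ≤ ∑ i, x i * h m i := fun m =>
    Finset.sum_nonneg fun i _ => mul_nonneg (hx0 i) (hh0 m i)
  have hsum_h : ∀ i, p ≤ ∑ m ∈ Finset.Icc 1 N, h m i := by
    intro i
    have h1 : c * Dhat P D i₀ ≤ (M ^ (n i)) i i₀ * Dhat P D i₀ :=
      mul_le_mul_of_nonneg_right (Finset.inf'_le _ (mem_univ i)) (hDhat_nn i₀)
    have h2 : (M ^ (n i)) i i₀ * Dhat P D i₀ ≤ h (n i) i :=
      Finset.single_le_sum
        (fun j _ => mul_nonneg (matpow_entry_nonneg hPnn _ i j) (hDhat_nn j)) (mem_univ i₀)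
    have h3 : h (n i) i ≤ ∑ m ∈ Finset.Icc 1 N, h m i :=
      Finset.single_le_sum (fun m _ => hh0 m i) (Finset.mem_Icc.mpr ⟨hn1 i, hnN i⟩)
    rw [hpdef]; linarith
  have main : γ ^ N * (p * (1 - α)) ≤ (N:ℝ) * δ := by
    have e1 : p * (1 - α) ≤ ∑ i, x i * (∑ m ∈ Finset.Icc 1 N, h m i) := by
      have e1a : p * ∑ i, x i ≤ ∑ i, x i * (∑ m ∈ Finset.Icc 1 N, h m i) := by
        rw [Finset.mul_sum]
        exact Finset.sum_le_sum fun i _ => by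
          rw [mul_comm p (x i)]
          exact mul_le_mul_of_nonneg_left (hsum_h i) (hx0 i)
      have hs : ∑ i, x i = 1 - α := by linarith
      rw [← hs]; exact e1a
    have e2 : ∑ i, x i * (∑ m ∈ Finset.Icc 1 N, h m i)
        = ∑ m ∈ Finset.Icc 1 N, ∑ i, x i * h m i := by
      simp_rw [Finset.mul_sum]
      rw [Finset.sum_comm]
    have e5 : ∑ _m ∈ Finset.Icc 1 N, δ = (N:ℝ) * δ := by
      rw [Finset.sum_const, Nat.card_Icc]
      simp [nsmul_eq_mul]
    calc γ ^ N * (p * (1-α)) ≤ γ^N * ∑ i, x i * (∑ m ∈ Finset.Icc 1 N, h m i) :=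
          mul_le_mul_of_nonneg_left e1 (pow_nonneg hγ0.le N)
      _ = ∑ m ∈ Finset.Icc 1 N, γ^N * (∑ i, x i * h m i) := by rw [e2, Finset.mul_sum]
      _ ≤ ∑ m ∈ Finset.Icc 1 N, γ^m * (∑ i, x i * h m i) :=
          Finset.sum_le_sum fun m hm => mul_le_mul_of_nonneg_right
            (pow_le_pow_of_le_one hγ0.le hγ1 (Finset.mem_Icc.mp hm).2) (hxh0 m)
      _ ≤ ∑ _m ∈ Finset.Icc 1 N, δ :=
          Finset.sum_le_sum fun m _ => le_trans (key1 m) (key2 m)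
      _ = (N:ℝ) * δ := e5
  have hTγδ : γ * δ ≤ ∑ i, DhatPT P D H i * μ' (some i) := by
    have hgd : ∀ i, γ * Dhat P D i ≤ DhatPT P D H i := by
      intro i
      rw [Dhat, DhatPT, Finset.mul_sum]
      refine Finset.sum_le_sum fun j _ => ?_
      calc γ * (D i j * P i j) = D i j * (γ * P i j) := by ring
        _ ≤ D i j * (b ^ (D i j) * P i j) :=
            mul_le_mul_of_nonneg_left (hQγ i j) (hD0 i j)
        _ = D i j * ((1 - 1/H) ^ (D i j) * P i j) := by rw [← hbdef]
    calc γ * δ = ∑ i, (γ * Dhat P D i) * x i := by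
          rw [hδdef, Finset.mul_sum]
          exact Finset.sum_congr rfl fun i _ => by ring
      _ ≤ ∑ i, DhatPT P D H i * x i :=
          Finset.sum_le_sum fun i _ => mul_le_mul_of_nonneg_right (hgd i) (hx0 i)
      _ = ∑ i, DhatPT P D H i * μ' (some i) := rfl
  have h9 : γ ^ N * (p * γ) ≤ γ ^ N * (p * (1-α)) :=
    mul_le_mul_of_nonneg_left (mul_le_mul_of_nonneg_left hγ1α hp.le) (pow_nonneg hγ0.le N)
  have hfin : p * 2⁻¹ ≤ (N:ℝ) * ∑ i, DhatPT P D H i * μ' (some i) := by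
    calc p * 2⁻¹ ≤ p * γ^(N+2) := mul_le_mul_of_nonneg_left hγN2 hp.le
      _ = γ * (γ ^ N * (p * γ)) := by ring
      _ ≤ γ * (γ ^ N * (p * (1 - α))) := mul_le_mul_of_nonneg_left h9 hγ0.le
      _ ≤ γ * ((N:ℝ) * δ) := mul_le_mul_of_nonneg_left main hγ0.le
      _ = (N:ℝ) * (γ * δ) := by ring
      _ ≤ (N:ℝ) * ∑ i, DhatPT P D H i * μ' (some i) :=
          mul_le_mul_of_nonneg_left hTγδ hNpos.le
  rw [div_lt_iff₀ (by positivity)]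
  nlinarith [hfin, hp, hNpos]
end
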